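/- arXiv:1210.7958 — 8 statements merged into one kernel-verified Lean document; each statement's English description precedes it below -/
import Mathlib

section
/- Let G be a group whose center Z(G) has finite index n = [G : Z(G)]. Then the commutator subgroup G′ of G is finite, and its order satisfies |G′| ≤ (n² − 3n + 3)^{n(n² − 3n + 3)} ≤ n^{2n³}. -/
open Subgroup
open scoped commutatorElement

section helpers
variable {G : Type*} [Group G]

private lemma comm_mul_center_right (a b z : G) (hz : z ∈ Subgroup.center G) :
    ⁅a, b * z⁆ = ⁅a, b⁆ := by
  have hz1 : ∀ g : G, g * z = z * g := Subgroup.mem_center_iff.mp hz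
  calc ⁅a, b * z⁆ = a * b * (z * a⁻¹) * z⁻¹ * b⁻¹ := by group
    _ = a * b * (a⁻¹ * z) * z⁻¹ * b⁻¹ := by rw [← hz1 a⁻¹]
    _ = ⁅a, b⁆ := by group

private lemma comm_mul_center_left (a b z : G) (hz : z ∈ Subgroup.center G) :
    ⁅a * z, b⁆ = ⁅a, b⁆ := by
  have hz1 : ∀ g : G, g * z = z * g := Subgroup.mem_center_iff.mp hz
  calc ⁅a * z, b⁆ = a * (z * b) * z⁻¹ * a⁻¹ * b⁻¹ := by group
    _ = a * (b * z) * z⁻¹ * a⁻¹ * b⁻¹ := by rw [hz1 b]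
    _ = ⁅a, b⁆ := by group

private lemma comm_out_eq (a b : G) :
    ⁅((a : G ⧸ center G)).out, ((b : G ⧸ center G)).out⁆ = ⁅a, b⁆ := by
  have ha : a⁻¹ * ((a : G ⧸ center G)).out ∈ center G :=
    QuotientGroup.eq.mp (QuotientGroup.out_eq' (a : G ⧸ center G)).symm
  have hb : b⁻¹ * ((b : G ⧸ center G)).out ∈ center G :=
    QuotientGroup.eq.mp (QuotientGroup.out_eq' (b : G ⧸ center G)).symm
  have ea : ((a : G ⧸ center G)).out = a * (a⁻¹ * ((a : G ⧸ center G)).out) := by group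
  have eb : ((b : G ⧸ center G)).out = b * (b⁻¹ * ((b : G ⧸ center G)).out) := by group
  rw [ea, eb, comm_mul_center_left _ _ _ ha, comm_mul_center_right _ _ _ hb]

end helpers

private lemma aux_pow_ineq : ∀ (k a : ℕ), a ^ (k + 1) + (k + 1) * a ^ k ≤ (a + 1) ^ (k + 1) := by
  intro k
  induction k with
  | zero => intro a; simp
  | succ k ih =>
    intro a
    have h1 : (a + 1) ^ (k + 1 + 1) = (a + 1) ^ (k + 1) * (a + 1) := by ring
    have h2 : (a ^ (k + 1) + (k + 1) * a ^ k) * (a + 1) ≤ (a + 1) ^ (k + 1) * (a + 1) :=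
      Nat.mul_le_mul_right _ (ih a)
    have h3 : a ^ (k + 1 + 1) + (k + 1 + 1) * a ^ (k + 1) ≤
        (a ^ (k + 1) + (k + 1) * a ^ k) * (a + 1) := by
      have : a ^ (k + 1 + 1) = a ^ (k+1) * a := by ring
      have h4 : a ^ (k+1) = a ^ k * a := by ring
      nlinarith [Nat.zero_le (a ^ k), Nat.zero_le ((k+1) * a ^ k)]
    omega

private lemma two_mul_pow_le {n : ℕ} (hn : 1 ≤ n) : 2 * n ^ n ≤ (n + 1) ^ n := by
  obtain ⟨k, rfl⟩ : ∃ k, n = k + 1 := ⟨n - 1, by omega⟩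
  have := aux_pow_ineq k (k + 1)
  have h : (k + 1) * (k + 1) ^ k = (k + 1) ^ (k + 1) := by ring
  omega

/-- (Schur-type bound) If the center of `G` has finite index `n`, then the commutator
subgroup `G'` is finite, of order at most `(n² − 3n + 3)^(n(n² − 3n + 3)) ≤ n^(2n³)`.
(Here `n² − 3n + 3` is written as `n ^ 2 + 3 - 3 * n` so that natural subtraction does
not truncate.) -/
theorem commutator_finite_and_card_le_of_index_center_eq (G : Type*) [Group G]
    (n : ℕ) (hn : n ≠ 0) (hidx : (Subgroup.center G).index = n) :
    Finite (commutator G) ∧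
      Nat.card (commutator G) ≤ (n ^ 2 + 3 - 3 * n) ^ (n * (n ^ 2 + 3 - 3 * n)) ∧
      (n ^ 2 + 3 - 3 * n) ^ (n * (n ^ 2 + 3 - 3 * n)) ≤ n ^ (2 * n ^ 3) := by
  classical
  set m : ℕ := n ^ 2 + 3 - 3 * n with hm
  have hn1 : 1 ≤ n := Nat.one_le_iff_ne_zero.mpr hn
  have hnsq : n ≤ n ^ 2 := by nlinarith
  have hq : n * n = n ^ 2 := by ring
  have hm1 : 1 ≤ m := by
    have h32 : 3 * n ≤ n ^ 2 + 2 := by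
      rcases Nat.lt_or_ge n 3 with h | h
      · interval_cases n <;> norm_num
      · have := Nat.mul_le_mul_right n h
        omega
    omega
  -- second inequality, valid for all n ≥ 1
  have hsecond : m ^ (n * m) ≤ n ^ (2 * n ^ 3) := by
    have hmn2 : m ≤ n ^ 2 := by omega
    have he : n * m ≤ n ^ 3 := by
      calc n * m ≤ n * n ^ 2 := Nat.mul_le_mul_left _ hmn2
        _ = n ^ 3 := by ring
    calc m ^ (n * m) ≤ (n ^ 2) ^ (n * m) := Nat.pow_le_pow_left hmn2 _
      _ ≤ (n ^ 2) ^ (n ^ 3) := Nat.pow_le_pow_right (by omega) he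
      _ = n ^ (2 * n ^ 3) := by rw [← pow_mul]
  -- case n ≤ 3 : G is abelian
  by_cases hsmall : n ≤ 3
  · have hcomm : ∀ a b : G, a * b = b * a := by
      rcases Nat.lt_or_ge n 2 with h2 | h2
      · -- n = 1
        have : (Subgroup.center G).index = 1 := by omega
        have htop : Subgroup.center G = ⊤ := Subgroup.index_eq_one.mp this
        intro a b
        exact (Subgroup.mem_center_iff.mp (htop ▸ Subgroup.mem_top a) b).symm
      · -- n = 2 or 3 : prime
        have hp : Nat.Prime n := by interval_cases n <;> norm_num
        haveI : Fact (Nat.Prime n) := ⟨hp⟩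
        have hcard : Nat.card (G ⧸ Subgroup.center G) = n := by
          rw [← Subgroup.index_eq_card, hidx]
        haveI : IsCyclic (G ⧸ Subgroup.center G) := isCyclic_of_prime_card hcard
        exact (commGroupOfCyclicCenterQuotient (QuotientGroup.mk' (Subgroup.center G))
          (by rw [QuotientGroup.ker_mk']) ).mul_comm
    have hbot : commutator G = ⊥ := by
      rw [_root_.commutator_def, Subgroup.commutator_eq_bot_iff_le_centralizer]
      intro x _
      rw [Subgroup.mem_centralizer_iff]
      intro y _
      exact hcomm y x
    rw [hbot]
    refine ⟨inferInstance, ?_, hsecond⟩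
    rw [Subgroup.card_bot]
    exact Nat.one_le_pow _ _ (by omega)
  push_neg at hsmall
  have h4 : 4 ≤ n := hsmall
  -- Finiteness of the quotient
  haveI hQfin : Finite (G ⧸ Subgroup.center G) := by
    refine Nat.finite_of_card_ne_zero ?_
    rw [← Subgroup.index_eq_card, hidx]; exact hn
  haveI : Fintype (G ⧸ Subgroup.center G) := Fintype.ofFinite _
  set Q := G ⧸ Subgroup.center G
  have hQcard : Fintype.card Q = n := by
    rw [← Nat.card_eq_fintype_card, ← Subgroup.index_eq_card, hidx]
  -- the commutator set
  set f : Q × Q → G := fun p => ⁅p.1.out, p.2.out⁆ with hf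
  set s : Finset (Q × Q) := (Finset.univ.erase (1 : Q)).offDiag with hs
  set T : Finset G := insert 1 (s.image f) with hT
  have hsub : commutatorSet G ⊆ ↑T := by
    rintro g ⟨a, b, rfl⟩
    by_cases ha : a ∈ Subgroup.center G
    · have : ⁅a, b⁆ = 1 := commutatorElement_eq_one_iff_mul_comm.mpr
        (Subgroup.mem_center_iff.mp ha b).symm
      rw [this]; exact Finset.mem_coe.mpr (Finset.mem_insert_self 1 _)
    by_cases hb : b ∈ Subgroup.center G
    · have : ⁅a, b⁆ = 1 := commutatorElement_eq_one_iff_mul_comm.mpr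
        (Subgroup.mem_center_iff.mp hb a)
      rw [this]; exact Finset.mem_coe.mpr (Finset.mem_insert_self 1 _)
    by_cases hab : (a : Q) = (b : Q)
    · have hz : a⁻¹ * b ∈ Subgroup.center G := QuotientGroup.eq.mp hab
      have : ⁅a, b⁆ = 1 := by
        have hbeq : b = a * (a⁻¹ * b) := by group
        rw [hbeq, comm_mul_center_right _ _ _ hz, commutatorElement_self]
      rw [this]; exact Finset.mem_coe.mpr (Finset.mem_insert_self 1 _)
    · refine Finset.mem_coe.mpr (Finset.mem_insert_of_mem ?_)
      refine Finset.mem_image.mpr ⟨((a : Q), (b : Q)), ?_, comm_out_eq a b⟩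
      rw [hs, Finset.mem_offDiag]
      refine ⟨?_, ?_, hab⟩
      · exact Finset.mem_erase.mpr ⟨fun h => ha (QuotientGroup.eq_one_iff a |>.mp h),
          Finset.mem_univ _⟩
      · exact Finset.mem_erase.mpr ⟨fun h => hb (QuotientGroup.eq_one_iff b |>.mp h),
          Finset.mem_univ _⟩
  have hcfin : (commutatorSet G).Finite := Set.Finite.subset T.finite_toSet hsub
  haveI : Finite (commutatorSet G) := hcfin.to_subtype
  -- cardinality of commutatorSet
  have hk : Nat.card (commutatorSet G) ≤ m := by
    have h1 : Nat.card (commutatorSet G) ≤ T.card := by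
      rw [Nat.card_coe_set_eq]
      calc (commutatorSet G).ncard ≤ (↑T : Set G).ncard :=
            Set.ncard_le_ncard hsub T.finite_toSet
        _ = T.card := Set.ncard_coe_finset T
    have h2 : T.card ≤ 1 + s.card := by
      calc T.card ≤ (s.image f).card + 1 := Finset.card_insert_le _ _
        _ ≤ s.card + 1 := by exact Nat.add_le_add_right (Finset.card_image_le) 1
        _ = 1 + s.card := by omega
    have h3 : s.card = (n - 1) * (n - 1) - (n - 1) := by
      rw [hs, Finset.offDiag_card, Finset.card_erase_of_mem (Finset.mem_univ _),
        Finset.card_univ, hQcard]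
    obtain ⟨j, rfl⟩ : ∃ j, n = j + 4 := ⟨n - 4, by omega⟩
    have e0 : j + 4 - 1 = j + 3 := by omega
    rw [e0] at h3
    have e1 : (j + 3) * (j + 3) = j * j + 6 * j + 9 := by ring
    have e2 : (j + 4) ^ 2 = j * j + 8 * j + 16 := by ring
    omega
  -- the divisibility bound from Mathlib
  have hdvd := Subgroup.card_commutator_dvd_index_center_pow G
  rw [hidx] at hdvd
  have hpos : 0 < n ^ (n * Nat.card (commutatorSet G) + 1) := Nat.pow_pos (by omega)
  have hcard1 : Nat.card (commutator G) ≤ n ^ (n * Nat.card (commutatorSet G) + 1) :=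
    Nat.le_of_dvd hpos hdvd
  have hchain : n ^ (n * Nat.card (commutatorSet G) + 1) ≤ m ^ (n * m) := by
    have h4n : 4 * n ≤ n * n := Nat.mul_le_mul_right n h4
    have hn1m : n + 1 ≤ m := by omega
    have hnm : n ≤ m := by omega
    have hn2m : n ≤ 2 ^ m :=
      le_trans (le_of_lt (Nat.lt_two_pow_self (n := n))) (Nat.pow_le_pow_right (by norm_num) hnm)
    calc n ^ (n * Nat.card (commutatorSet G) + 1) ≤ n ^ (n * m + 1) :=
          Nat.pow_le_pow_right (by omega) (by
            have := Nat.mul_le_mul_left n hk; omega)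
      _ = (n ^ n) ^ m * n := by rw [pow_succ, pow_mul]
      _ ≤ (n ^ n) ^ m * 2 ^ m := Nat.mul_le_mul_left _ hn2m
      _ = (2 * n ^ n) ^ m := by rw [mul_pow]; ring
      _ ≤ ((n + 1) ^ n) ^ m := Nat.pow_le_pow_left (two_mul_pow_le (by omega)) _
      _ = (n + 1) ^ (n * m) := by rw [← pow_mul]
      _ ≤ m ^ (n * m) := Nat.pow_le_pow_left hn1m _
  exact ⟨inferInstance, le_trans hcard1 hchain, hsecond⟩
end

section
/- Let G be a finite group of order n, p a prime, and r > 0 with p^r dividing n. Then G contains at least one subgroup of order p^r, and the number of subgroups of G of order p^r is congruent to 1 modulo p. -/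
section McKay
open Equiv Equiv.Perm Function

private lemma headI_replicate {α : Type*} [Inhabited α] (n : ℕ) (hn : n ≠ 0) (a : α) :
    (List.replicate n a).headI = a := by
  cases n with
  | zero => exact absurd rfl hn
  | succ m => rfl

/-- McKay: `p` divides the number of solutions of `x ^ p = 1` when `p ∣ |Q|`. -/
private lemma mckay (Q : Type*) [Group Q] [Finite Q] (p : ℕ) [hp : Fact p.Prime]
    (hdvd : p ∣ Nat.card Q) :
    p ∣ Nat.card {x : Q // x ^ p = 1} := by
  classical
  have : Inhabited Q := ⟨1⟩
  have := Fintype.ofFinite Q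
  rw [Nat.card_eq_fintype_card] at hdvd
  have hp' : p - 1 ≠ 0 := mt tsub_eq_zero_iff_le.mp (not_le_of_gt hp.out.one_lt)
  have Scard : p ∣ Fintype.card (vectorsProdEqOne Q p) :=
    (VectorsProdEqOne.card Q p) ▸ (hdvd.trans (dvd_pow (dvd_refl _) hp'))
  let f : ℕ → vectorsProdEqOne Q p → vectorsProdEqOne Q p := fun k v =>
    VectorsProdEqOne.rotate v k
  have hf1 : ∀ v, f 0 v = v := VectorsProdEqOne.rotate_zero
  have hf2 : ∀ j k v, f k (f j v) = f (j + k) v := fun j k v =>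
    VectorsProdEqOne.rotate_rotate v j k
  have hf3 : ∀ v, f p v = v := VectorsProdEqOne.rotate_length
  let σ : Equiv.Perm (vectorsProdEqOne Q p) :=
    Equiv.mk (f 1) (f (p - 1)) (fun s => by rw [hf2, add_tsub_cancel_of_le hp.out.one_lt.le, hf3])
      fun s => by rw [hf2, tsub_add_cancel_of_le hp.out.one_lt.le, hf3]
  have hσ : σ ^ p ^ 1 = 1 := Perm.ext fun v => by
    have hσ' : ∀ k v, (σ ^ k) v = f k v := fun k =>
      Nat.rec (fun v => (hf1 v).symm) (fun k hk v => by
        rw [pow_succ, Perm.mul_apply, hk (σ v), Nat.succ_eq_one_add, ← hf2 1 k]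
        simp only [σ, coe_fn_mk]) k
    rw [pow_one, hσ', hf3, one_apply]
  have key := Equiv.Perm.card_compl_support_modEq hσ
  have hmem : ∀ v : vectorsProdEqOne Q p, v ∈ σ.supportᶜ ↔ v.1.1.rotate 1 = v.1.1 := by
    intro v
    rw [Finset.mem_compl, Equiv.Perm.mem_support, not_not]
    constructor
    · intro h
      exact congrArg (fun w => w.1.1) h
    · intro h
      exact Subtype.ext (Subtype.ext h)
  have hcard : Nat.card {x : Q // x ^ p = 1}
      = σ.supportᶜ.card := by
    rw [Nat.card_eq_fintype_card, Fintype.card_subtype]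
    refine Finset.card_bij' (fun x hx => ⟨⟨List.replicate p x, List.length_replicate⟩, ?_⟩)
      (fun v _ => v.1.1.headI) ?_ ?_ ?_ ?_
    · show (List.replicate p x).prod = 1
      rw [List.prod_replicate]
      exact (Finset.mem_filter.mp hx).2
    · intro x hx
      rw [hmem]
      exact List.rotate_replicate x p 1
    · intro v hv
      rw [hmem] at hv
      obtain ⟨a, ha⟩ := List.rotate_one_eq_self_iff_eq_replicate.mp hv
      rw [Finset.mem_filter]
      refine ⟨Finset.mem_univ _, ?_⟩
      show v.1.1.headI ^ p = 1
      have hlen : v.1.1.length = p := v.1.2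
      have hprod : v.1.1.prod = 1 := v.2
      rw [ha, hlen] at hprod ⊢
      rw [List.prod_replicate] at hprod
      rw [headI_replicate _ hp.out.ne_zero a]
      exact hprod
    · intro x hx
      exact headI_replicate _ hp.out.ne_zero x
    · intro v hv
      rw [hmem] at hv
      obtain ⟨a, ha⟩ := List.rotate_one_eq_self_iff_eq_replicate.mp hv
      have hlen : v.1.1.length = p := v.1.2
      refine Subtype.ext (Subtype.ext ?_)
      show List.replicate p v.1.1.headI = v.1.1
      conv_rhs => rw [ha, hlen]
      rw [ha, hlen, headI_replicate _ hp.out.ne_zero a]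
  rw [Nat.ModEq, Nat.mod_eq_zero_of_dvd Scard] at key
  rw [hcard]
  exact Nat.dvd_of_mod_eq_zero key
end McKay

open Finset

/-- The number of subgroups of order `p` is `≡ 1 [MOD p]` when `p ∣ |Q|`. -/
private lemma lemE (Q : Type*) [Group Q] [Finite Q] (p : ℕ) [hp : Fact p.Prime]
    (hdvd : p ∣ Nat.card Q) :
    Nat.card {K : Subgroup Q // Nat.card K = p} ≡ 1 [MOD p] := by
  classical
  have := Fintype.ofFinite Q
  have := Fintype.ofFinite (Subgroup Q)
  set 𝒦 : Finset (Subgroup Q) := univ.filter (fun K : Subgroup Q => Nat.card K = p) with h𝒦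
  set Ω : Finset Q := univ.filter (fun x : Q => orderOf x = p) with hΩ
  -- each subgroup of order p in K has carrier-filter card = Nat.card K
  have hcardK : ∀ K : Subgroup Q, (univ.filter (fun x : Q => x ∈ K)).card = Nat.card K := by
    intro K
    rw [Nat.card_eq_fintype_card, Fintype.card_subtype]
  -- fibers of x ↦ zpowers x
  have hmaps : ∀ x ∈ Ω, Subgroup.zpowers x ∈ 𝒦 := by
    intro x hx
    rw [hΩ, mem_filter] at hx
    rw [h𝒦, mem_filter]
    exact ⟨mem_univ _, by rw [Nat.card_zpowers, hx.2]⟩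
  have hfiber : ∀ K ∈ 𝒦, (Ω.filter (fun x => Subgroup.zpowers x = K)).card = p - 1 := by
    intro K hK
    rw [h𝒦, mem_filter] at hK
    have hKp : Nat.card K = p := hK.2
    have heq : Ω.filter (fun x => Subgroup.zpowers x = K)
        = (univ.filter (fun x : Q => x ∈ K)).erase 1 := by
      ext x
      rw [hΩ, filter_filter, mem_filter, mem_erase, mem_filter]
      constructor
      · rintro ⟨-, hord, hz⟩
        refine ⟨fun h1 => ?_, mem_univ x, ?_⟩
        · rw [h1, orderOf_one] at hord; exact hp.out.one_lt.ne' hord.symm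
        · rw [← hz]; exact Subgroup.mem_zpowers x
      · rintro ⟨h1, -, hxK⟩
        have hord : orderOf x = p := by
          have hdvd' : orderOf x ∣ p := by
            rw [← hKp]
            exact (Subgroup.orderOf_coe (⟨x, hxK⟩ : K)) ▸ orderOf_dvd_natCard (⟨x, hxK⟩ : K)
          rcases (Nat.dvd_prime hp.out).mp hdvd' with h | h
          · exact absurd (orderOf_eq_one_iff.mp h) h1
          · exact h
        refine ⟨mem_univ x, hord, ?_⟩
        apply Subgroup.eq_of_le_of_card_ge
        · rwa [Subgroup.zpowers_le]
        · rw [Nat.card_zpowers, hord, hKp]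
    rw [heq, Finset.card_erase_of_mem, hcardK, hKp]
    rw [mem_filter]
    exact ⟨mem_univ _, K.one_mem⟩
  -- double counting
  have hΩcard : Ω.card = 𝒦.card * (p - 1) := by
    rw [Finset.card_eq_sum_card_fiberwise hmaps]
    rw [Finset.sum_congr rfl hfiber, Finset.sum_const, smul_eq_mul]
  -- solutions of x ^ p = 1
  have hsol : Nat.card {x : Q // x ^ p = 1} = Ω.card + 1 := by
    rw [Nat.card_eq_fintype_card, Fintype.card_subtype]
    have : univ.filter (fun x : Q => x ^ p = 1) = insert 1 Ω := by
      ext x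
      rw [mem_filter, mem_insert, hΩ, mem_filter]
      constructor
      · rintro ⟨-, hx⟩
        rcases (Nat.dvd_prime hp.out).mp (orderOf_dvd_of_pow_eq_one hx) with h | h
        · exact Or.inl (orderOf_eq_one_iff.mp h)
        · exact Or.inr ⟨mem_univ x, h⟩
      · rintro (rfl | ⟨-, h⟩)
        · exact ⟨mem_univ _, one_pow p⟩
        · exact ⟨mem_univ x, by rw [← h]; exact pow_orderOf_eq_one x⟩
    rw [this, Finset.card_insert_of_notMem, add_comm]
    rw [hΩ, mem_filter]
    rintro ⟨-, h⟩
    rw [orderOf_one] at h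
    exact hp.out.one_lt.ne' h.symm
  have hdvd2 : p ∣ 𝒦.card * (p - 1) + 1 := by
    rw [← hΩcard, ← hsol]
    exact mckay Q p hdvd
  -- conclude in ZMod p
  have hcount : Nat.card {K : Subgroup Q // Nat.card K = p} = 𝒦.card := by
    rw [Nat.card_eq_fintype_card, Fintype.card_subtype]
  rw [hcount]
  have h0 : ((𝒦.card * (p - 1) + 1 : ℕ) : ZMod p) = 0 :=
    (ZMod.natCast_eq_zero_iff _ _).mpr hdvd2
  push_cast [Nat.cast_sub hp.out.one_le] at h0
  rw [ZMod.natCast_self] at h0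
  have h1 : ((𝒦.card : ℕ) : ZMod p) = ((1 : ℕ) : ZMod p) := by
    push_cast
    linear_combination -h0
  exact (ZMod.natCast_eq_natCast_iff _ _ _).mp h1
/-- A subgroup of index `p` in a `p`-group of order `p ^ (r + 1)` is normalized by it. -/
private lemma lemN {G : Type*} [Group G] [Finite G] {p r : ℕ} [hp : Fact p.Prime]
    {H K : Subgroup G} (hHK : H ≤ K) (hH : Nat.card H = p ^ r)
    (hK : Nat.card K = p ^ (r + 1)) : K ≤ Subgroup.normalizer (H : Set G) := by
  have hH' : Nat.card (H.subgroupOf K) = p ^ r := by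
    rw [Nat.card_congr (Subgroup.subgroupOfEquivOfLe hHK).toEquiv, hH]
  have hpg : IsPGroup p K := IsPGroup.of_card hK
  have hnil : Group.IsNilpotent K := hpg.isNilpotent
  have hnc : NormalizerCondition K := normalizerCondition_of_isNilpotent
  have htop : Subgroup.normalizer ((H.subgroupOf K : Subgroup K) : Set K) = ⊤ := by
    by_contra hne
    have hne' : H.subgroupOf K ≠ ⊤ := by
      intro h
      rw [h] at hH'
      rw [Subgroup.card_top, hK] at hH'
      exact (pow_lt_pow_right₀ hp.out.one_lt (Nat.lt_succ_self r)).ne' hH'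
    have hlt := hnc _ (lt_top_iff_ne_top.mpr hne')
    -- card of normalizer strictly exceeds p ^ r and divides p ^ (r + 1)
    set N := Subgroup.normalizer ((H.subgroupOf K : Subgroup K) : Set K)
    have hdvdN : Nat.card N ∣ p ^ (r + 1) := hK ▸ Subgroup.card_subgroup_dvd_card N
    have hleN : Nat.card (H.subgroupOf K) ≤ Nat.card N := Subgroup.card_le_of_le hlt.le
    have hneN : Nat.card (H.subgroupOf K) ≠ Nat.card N := by
      intro h
      exact hlt.ne (Subgroup.eq_of_le_of_card_ge hlt.le h.ge)
    obtain ⟨j, hj, hjN⟩ := (Nat.dvd_prime_pow hp.out).mp hdvdN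
    have hrj : r < j := by
      by_contra hle
      push_neg at hle
      have : Nat.card N ≤ p ^ r := hjN ▸ Nat.pow_le_pow_right hp.out.pos hle
      omega
    have : j = r + 1 := le_antisymm hj hrj
    apply hne
    apply Subgroup.eq_top_of_card_eq
    rw [hjN, this, hK]
  have : (H.subgroupOf K).Normal := Subgroup.normalizer_eq_top_iff.mp htop
  exact Subgroup.le_normalizer_of_normal_subgroupOf hHK

open Subgroup QuotientGroup in
/-- The number of subgroups of order `p ^ (r + 1)` containing a fixed subgroup of order
`p ^ r` is `≡ 1 [MOD p]`. -/
private lemma lemU {G : Type*} [Group G] [Finite G] (p r : ℕ) [hp : Fact p.Prime]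
    (H : Subgroup G) (hH : Nat.card H = p ^ r) (hdvd : p ^ (r + 1) ∣ Nat.card G) :
    Nat.card {K : Subgroup G // Nat.card K = p ^ (r + 1) ∧ H ≤ K} ≡ 1 [MOD p] := by
  classical
  set N := normalizer (H : Set G) with hN
  set H' := H.subgroupOf N with hH'def
  have hH' : Nat.card H' = p ^ r := by
    rw [hH'def, Nat.card_congr (Subgroup.subgroupOfEquivOfLe Subgroup.le_normalizer).toEquiv, hH]
  have hNdvd : p ^ (r + 1) ∣ Nat.card N := Sylow.prime_pow_dvd_card_normalizer hdvd hH
  have hQdvd : p ∣ Nat.card (N ⧸ H') := by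
    have hcard := Subgroup.card_eq_card_quotient_mul_card_subgroup H'
    rw [hH'] at hcard
    rw [hcard, pow_succ] at hNdvd
    exact (Nat.mul_dvd_mul_iff_left (pow_pos hp.out.pos r)).mp
      (by rwa [mul_comm (Nat.card (N ⧸ H')) (p ^ r)] at hNdvd)
  have key := lemE (N ⧸ H') p hQdvd
  -- cardinality of preimages under mk'
  have cardComap : ∀ L : Subgroup (N ⧸ H'),
      Nat.card (Subgroup.comap (QuotientGroup.mk' H') L) = p ^ r * Nat.card L := by
    intro L
    have e := QuotientGroup.preimageMkEquivSubgroupProdSet H' (L : Set (N ⧸ H'))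
    have h1 : Nat.card (Subgroup.comap (QuotientGroup.mk' H') L)
        = Nat.card (QuotientGroup.mk ⁻¹' (L : Set (N ⧸ H'))) := rfl
    rw [h1, Nat.card_congr e, Nat.card_prod, hH']
    rfl
  have hker : (QuotientGroup.mk' H').ker = H' := QuotientGroup.ker_mk' H'
  -- the equivalence
  let e : {K : Subgroup G // Nat.card K = p ^ (r + 1) ∧ H ≤ K}
      ≃ {L : Subgroup (N ⧸ H') // Nat.card L = p} :=
  { toFun := fun K => ⟨Subgroup.map (QuotientGroup.mk' H') ((K : Subgroup G).subgroupOf N), by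
      obtain ⟨K, hK, hHK⟩ := K
      have hKN : K ≤ N := lemN hHK hH hK
      have hsub : H' ≤ K.subgroupOf N := Subgroup.comap_mono hHK
      have hco : Subgroup.comap (QuotientGroup.mk' H')
          (Subgroup.map (QuotientGroup.mk' H') (K.subgroupOf N)) = K.subgroupOf N :=
        Subgroup.comap_map_eq_self (by rw [hker]; exact hsub)
      have hcardK : Nat.card (K.subgroupOf N) = p ^ (r + 1) := by
        rw [Nat.card_congr (Subgroup.subgroupOfEquivOfLe hKN).toEquiv, hK]
      have := cardComap (Subgroup.map (QuotientGroup.mk' H') (K.subgroupOf N))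
      rw [hco, hcardK, pow_succ] at this
      exact (Nat.eq_of_mul_eq_mul_left (pow_pos hp.out.pos r) this.symm)⟩
    invFun := fun L => ⟨Subgroup.map N.subtype (Subgroup.comap (QuotientGroup.mk' H') L), by
      obtain ⟨L, hL⟩ := L
      constructor
      · rw [Nat.card_congr (Subgroup.equivMapOfInjective _ N.subtype
          N.subtype_injective).toEquiv.symm, cardComap, hL, pow_succ]
      · have h1 : H' ≤ Subgroup.comap (QuotientGroup.mk' H') L := by
          intro x hx
          rw [Subgroup.mem_comap]
          have : (QuotientGroup.mk' H') x = 1 := by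
            rw [← MonoidHom.mem_ker, hker]; exact hx
          rw [this]; exact L.one_mem
        have h2 := Subgroup.map_mono (f := N.subtype) h1
        exact le_trans (le_of_eq (by
          rw [Subgroup.subgroupOf_map_subtype, inf_eq_left.mpr Subgroup.le_normalizer])) h2⟩
    left_inv := by
      rintro ⟨K, hK, hHK⟩
      have hKN : K ≤ N := lemN hHK hH hK
      have hsub : H' ≤ K.subgroupOf N := Subgroup.comap_mono hHK
      ext1
      show Subgroup.map N.subtype _ = K
      rw [Subgroup.comap_map_eq_self (by rw [hker]; exact hsub),
        Subgroup.subgroupOf_map_subtype, inf_eq_left.mpr hKN]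
    right_inv := by
      rintro ⟨L, hL⟩
      ext1
      show Subgroup.map (QuotientGroup.mk' H') _ = L
      rw [show (Subgroup.map N.subtype (Subgroup.comap (QuotientGroup.mk' H') L)).subgroupOf N
          = Subgroup.comap (QuotientGroup.mk' H') L from
          Subgroup.comap_map_eq_self_of_injective N.subtype_injective _,
        Subgroup.map_comap_eq_self_of_surjective (QuotientGroup.mk'_surjective H')] }
  rwa [Nat.card_congr e]
private lemma sum_modEq_card {β : Type*} (p : ℕ) (s : Finset β) (f : β → ℕ)
    (h : ∀ b ∈ s, f b ≡ 1 [MOD p]) : (∑ b ∈ s, f b) ≡ s.card [MOD p] := by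
  rw [← ZMod.natCast_eq_natCast_iff]
  push_cast
  rw [Finset.sum_congr rfl (fun b hb => show ((f b : ZMod p)) = 1 by
    have := (ZMod.natCast_eq_natCast_iff _ _ _).mpr (h b hb)
    rwa [Nat.cast_one] at this)]
  rw [Finset.sum_const, nsmul_eq_mul, mul_one]

private lemma frobCount (p : ℕ) [hp : Fact p.Prime] :
    ∀ r : ℕ, 1 ≤ r → ∀ (G : Type u) [Group G] [Finite G], p ^ r ∣ Nat.card G →
      Nat.card {H : Subgroup G // Nat.card H = p ^ r} ≡ 1 [MOD p] := by
  refine Nat.le_induction ?_ ?_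
  · intro G _ _ hdvd
    rw [pow_one] at hdvd ⊢
    exact lemE G p hdvd
  · intro r hr IH G _ _ hdvd
    classical
    have := Fintype.ofFinite G
    have := Fintype.ofFinite (Subgroup G)
    set 𝒮 : Finset (Subgroup G) := univ.filter (fun K : Subgroup G => Nat.card K = p ^ (r + 1))
      with h𝒮
    set 𝒯 : Finset (Subgroup G) := univ.filter (fun H : Subgroup G => Nat.card H = p ^ r)
      with h𝒯
    have hsubcard : ∀ (P : Subgroup G → Prop) [DecidablePred P],
        Nat.card {H : Subgroup G // P H} = (univ.filter P).card := by
      intro P _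
      rw [Nat.card_eq_fintype_card, Fintype.card_subtype]
    -- the count over 𝒯
    have hT : 𝒯.card ≡ 1 [MOD p] := by
      have := IH G (dvd_trans (pow_dvd_pow p (Nat.le_succ r)) hdvd)
      rwa [hsubcard] at this
    -- for each H ∈ 𝒯, the count of K ∈ 𝒮 above H
    have hU : ∀ H ∈ 𝒯, (𝒮.filter (fun K => H ≤ K)).card ≡ 1 [MOD p] := by
      intro H hH
      rw [h𝒯, mem_filter] at hH
      have := lemU p r H hH.2 hdvd
      rwa [hsubcard, ← Finset.filter_filter] at this
    -- for each K ∈ 𝒮, the count of H ∈ 𝒯 below K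
    have hM : ∀ K ∈ 𝒮, (𝒯.filter (fun H => H ≤ K)).card ≡ 1 [MOD p] := by
      intro K hK
      rw [h𝒮, mem_filter] at hK
      have hKdvd : p ^ r ∣ Nat.card K := hK.2 ▸ pow_dvd_pow p (Nat.le_succ r)
      have hIK := IH K hKdvd
      have e : {H' : Subgroup K // Nat.card H' = p ^ r}
          ≃ {H : Subgroup G // Nat.card H = p ^ r ∧ H ≤ K} :=
      { toFun := fun H' => ⟨Subgroup.map K.subtype H', by
          constructor
          · rw [← Nat.card_congr (Subgroup.equivMapOfInjective _ K.subtype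
              K.subtype_injective).toEquiv, H'.2]
          · exact Subgroup.map_subtype_le _⟩
        invFun := fun H => ⟨(H : Subgroup G).subgroupOf K, by
          obtain ⟨H, h1, h2⟩ := H
          rw [Nat.card_congr (Subgroup.subgroupOfEquivOfLe h2).toEquiv, h1]⟩
        left_inv := by
          rintro ⟨H', h⟩
          ext1
          exact Subgroup.comap_map_eq_self_of_injective K.subtype_injective _
        right_inv := by
          rintro ⟨H, h1, h2⟩
          ext1
          show Subgroup.map K.subtype (H.subgroupOf K) = H
          rw [Subgroup.subgroupOf_map_subtype, inf_eq_left.mpr h2] }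
      rw [Nat.card_congr e, hsubcard, ← Finset.filter_filter] at hIK
      exact hIK
    -- double counting
    have hswap : ∑ K ∈ 𝒮, (𝒯.filter (fun H => H ≤ K)).card
        = ∑ H ∈ 𝒯, (𝒮.filter (fun K => H ≤ K)).card := by
      simp only [Finset.card_filter]
      exact Finset.sum_comm
    have h1 : (∑ K ∈ 𝒮, (𝒯.filter (fun H => H ≤ K)).card) ≡ 𝒮.card [MOD p] :=
      sum_modEq_card p 𝒮 _ hM
    have h2 : (∑ H ∈ 𝒯, (𝒮.filter (fun K => H ≤ K)).card) ≡ 𝒯.card [MOD p] :=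
      sum_modEq_card p 𝒯 _ hU
    rw [hsubcard]
    exact (h1.symm.trans (hswap ▸ h2)).trans hT

/-- (Frobenius) If `p ^ r` (with `p` prime, `r > 0`) divides the order of a finite
group `G`, then `G` has a subgroup of order `p ^ r`, and the number of subgroups of
order `p ^ r` is congruent to `1` modulo `p`. -/
theorem exists_subgroup_card_pow_prime_and_count_modEq_one (G : Type*) [Group G]
    [Finite G] (p r : ℕ) (hp : p.Prime) (hr : 0 < r) (hdvd : p ^ r ∣ Nat.card G) :
    (∃ H : Subgroup G, Nat.card H = p ^ r) ∧
      Nat.card {H : Subgroup G | Nat.card H = p ^ r} ≡ 1 [MOD p] := by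
  have : Fact p.Prime := ⟨hp⟩
  exact ⟨Sylow.exists_subgroup_card_pow_prime p hdvd, frobCount p r hr G hdvd⟩
end

section
/- Let n ≥ 4. Then every element of the symmetric group Sₙ can be written as a product of two elements of order 2. -/
open Equiv Equiv.Perm

private lemma exists_reverser {α : Type*} [Fintype α] [DecidableEq α] (σ : Equiv.Perm α) :
    ∃ τ : Equiv.Perm α, τ * τ = 1 ∧ τ * σ * τ = σ⁻¹ ∧ τ.support ⊆ σ.support := by
  induction σ using Equiv.Perm.cycle_induction_on with
  | base_one => exact ⟨1, by simp⟩
  | base_cycles c hc =>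
      classical
      set x := Classical.choose hc with hx
      have hx1 : c x ≠ x := (Classical.choose_spec hc).1
      have hx2 : ∀ y, c y ≠ y → ∃ i : ℤ, (c ^ i) x = y := (Classical.choose_spec hc).2
      set e := hc.zpowersEquivSupport with he
      set a' : Equiv.Perm {y // y ∈ c.support} :=
        (e.symm.trans (Equiv.inv (Subgroup.zpowers c))).trans e with ha'
      set a : Equiv.Perm α := Equiv.Perm.ofSubtype a' with ha
      have hmemx : x ∈ c.support := Equiv.Perm.mem_support.2 hx1
      have he_apply : ∀ (τ : Subgroup.zpowers c), (e τ : α) = (τ : Equiv.Perm α) x := by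
        rintro ⟨τ, hτ⟩; rfl
      have key : ∀ (i : ℤ), a ((c ^ i) x) = (c ^ (-i)) x := by
        intro i
        have hmem : (c ^ i) x ∈ c.support := Equiv.Perm.zpow_apply_mem_support.2 hmemx
        rw [ha, Equiv.Perm.ofSubtype_apply_of_mem a' hmem]
        have hsymm : e.symm ⟨(c ^ i) x, hmem⟩
            = ⟨c ^ i, Subgroup.zpow_mem _ (Subgroup.mem_zpowers c) i⟩ := by
          rw [Equiv.symm_apply_eq]
          apply Subtype.ext
          rw [he_apply]
        have h0 : (a' ⟨(c ^ i) x, hmem⟩ : α)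
            = (e ((e.symm ⟨(c ^ i) x, hmem⟩)⁻¹) : α) := rfl
        rw [h0, hsymm]
        have h1 : ((⟨c ^ i, Subgroup.zpow_mem _ (Subgroup.mem_zpowers c) i⟩ :
            Subgroup.zpowers c)⁻¹)
            = ⟨c ^ (-i), Subgroup.zpow_mem _ (Subgroup.mem_zpowers c) (-i)⟩ := by
          apply Subtype.ext; simp [zpow_neg]
        rw [h1, he_apply]
      have hfix : ∀ y, y ∉ c.support → a y = y := fun y hy =>
        Equiv.Perm.ofSubtype_apply_of_not_mem a' hy
      refine ⟨a, ?_, ?_, ?_⟩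
      · rw [ha, ← map_mul]
        have hone : a' * a' = 1 := by
          ext z
          simp [ha', Equiv.Perm.mul_apply, Equiv.trans_apply]
        rw [hone, map_one]
      · ext y
        simp only [Equiv.Perm.mul_apply]
        by_cases hy : y ∈ c.support
        · obtain ⟨i, rfl⟩ := hx2 y (Equiv.Perm.mem_support.1 hy)
          rw [key i]
          have h2 : c ((c ^ (-i)) x) = (c ^ (1 + -i)) x := by
            rw [zpow_one_add, Equiv.Perm.mul_apply]
          rw [h2, key (1 + -i), show -(1 + -i) = -1 + i from by ring, zpow_add,
            zpow_neg_one, Equiv.Perm.mul_apply]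
        · have hcy : c y = y := by
            by_contra h; exact hy (Equiv.Perm.mem_support.2 h)
          have hay : a y = y := hfix y hy
          have hcyinv : c⁻¹ y = y := by
            rw [Equiv.Perm.inv_eq_iff_eq]; exact hcy.symm
          rw [hay, hcy, hay, hcyinv]
      · intro y hy
        by_contra hyc
        exact (Equiv.Perm.mem_support.1 hy) (hfix y hyc)
  | induction_disjoint σ τ hd hσc ih1 ih2 =>
      obtain ⟨a₁, h1sq, h1conj, h1supp⟩ := ih1
      obtain ⟨a₂, h2sq, h2conj, h2supp⟩ := ih2
      have hds : _root_.Disjoint σ.support τ.support :=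
        Equiv.Perm.disjoint_iff_disjoint_support.1 hd
      have hc12 : Commute a₁ a₂ :=
        (Equiv.Perm.disjoint_iff_disjoint_support.2 (hds.mono h1supp h2supp)).commute
      have hca₂σ : Commute a₂ σ :=
        (Equiv.Perm.disjoint_iff_disjoint_support.2
          ((hds.symm.mono h2supp le_rfl).symm).symm).commute
      have hca₁τ : Commute a₁ τ :=
        (Equiv.Perm.disjoint_iff_disjoint_support.2 (hds.mono h1supp le_rfl)).commute
      refine ⟨a₁ * a₂, ?_, ?_, ?_⟩
      · calc a₁ * a₂ * (a₁ * a₂) = a₁ * (a₂ * a₁) * a₂ := by group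
          _ = a₁ * (a₁ * a₂) * a₂ := by rw [← hc12.eq]
          _ = (a₁ * a₁) * (a₂ * a₂) := by group
          _ = 1 := by rw [h1sq, h2sq, one_mul]
      · calc a₁ * a₂ * (σ * τ) * (a₁ * a₂)
            = a₁ * (a₂ * σ) * (τ * a₁) * a₂ := by group
          _ = a₁ * (σ * a₂) * (a₁ * τ) * a₂ := by rw [hca₂σ.eq, hca₁τ.eq]
          _ = (a₁ * σ) * (a₂ * a₁) * (τ * a₂) := by group
          _ = (a₁ * σ) * (a₁ * a₂) * (τ * a₂) := by rw [← hc12.eq]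
          _ = (a₁ * σ * a₁) * (a₂ * τ * a₂) := by group
          _ = σ⁻¹ * τ⁻¹ := by rw [h1conj, h2conj]
          _ = (σ * τ)⁻¹ := by rw [mul_inv_rev, (hd.commute.inv_inv).eq]
      · refine le_trans (Equiv.Perm.support_mul_le a₁ a₂) ?_
        rw [hd.support_mul]
        exact sup_le (le_trans h1supp (Finset.subset_union_left))
          (le_trans h2supp (Finset.subset_union_right))

private lemma order_two_of {G : Type*} [Group G] {g : G} (hsq : g * g = 1) (hne : g ≠ 1) :
    orderOf g = 2 :=
  orderOf_eq_prime (by rw [pow_two]; exact hsq) hne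

private lemma swap_order_two {α : Type*} [DecidableEq α] {x y : α} (h : x ≠ y) :
    orderOf (Equiv.swap x y) = 2 := by
  refine order_two_of (Equiv.swap_mul_self x y) (fun hc => h ?_)
  have := Equiv.swap_apply_left x y
  rw [hc] at this
  simpa using this

private lemma invol_case {n : ℕ} (hn : 4 ≤ n) (σ : Equiv.Perm (Fin n))
    (hsq : σ * σ = 1) (hne : σ ≠ 1) :
    ∃ a b : Equiv.Perm (Fin n), orderOf a = 2 ∧ orderOf b = 2 ∧ σ = a * b := by
  classical
  have hσσ : ∀ u, σ (σ u) = u := fun u => by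
    have : (σ * σ) u = (1 : Equiv.Perm (Fin n)) u := by rw [hsq]
    simpa using this
  obtain ⟨x, hx⟩ : ∃ x, σ x ≠ x := by
    by_contra h; push_neg at h
    exact hne (Equiv.Perm.ext fun u => by simpa using h u)
  by_cases hs : ∀ y, σ y ≠ y → y = x ∨ y = σ x
  · -- σ is the transposition (x, σ x)
    have hσswap : σ = Equiv.swap x (σ x) := by
      ext u
      by_cases hu : σ u = u
      · have hux : u ≠ x := fun h => hx (h ▸ hu)
        have huσx : u ≠ σ x := fun h => by
          have := hσσ x
          rw [← h, hu] at this
          exact hux this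
        rw [hu, Equiv.swap_apply_of_ne_of_ne hux huσx]
      · rcases hs u hu with rfl | rfl
        · rw [Equiv.swap_apply_left]
        · rw [Equiv.swap_apply_right, hσσ x]
    -- find two other points
    have hcard : 1 < ({x, σ x}ᶜ : Finset (Fin n)).card := by
      have h1 : ({x, σ x} : Finset (Fin n)).card ≤ 2 :=
        le_trans (Finset.card_insert_le _ _) (by simp)
      have h2 : ({x, σ x}ᶜ : Finset (Fin n)).card
          = Fintype.card (Fin n) - ({x, σ x} : Finset (Fin n)).card :=
        Finset.card_compl _
      rw [h2, Fintype.card_fin]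
      omega
    obtain ⟨w, hw, z, hz, hwz⟩ := Finset.one_lt_card.1 hcard
    simp only [Finset.mem_compl, Finset.mem_insert, Finset.mem_singleton, not_or] at hw hz
    have hdisj : Commute (Equiv.swap x (σ x)) (Equiv.swap w z) := by
      apply Equiv.Perm.Disjoint.commute
      intro u
      by_cases h1 : u = x ∨ u = σ x
      · right
        rcases h1 with rfl | rfl
        · exact Equiv.swap_apply_of_ne_of_ne (Ne.symm hw.1) (Ne.symm hz.1)
        · exact Equiv.swap_apply_of_ne_of_ne (Ne.symm hw.2) (Ne.symm hz.2)
      · push_neg at h1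
        left
        exact Equiv.swap_apply_of_ne_of_ne h1.1 h1.2
    refine ⟨Equiv.swap x (σ x) * Equiv.swap w z, Equiv.swap w z, ?_, swap_order_two hwz, ?_⟩
    · refine order_two_of ?_ ?_
      · calc Equiv.swap x (σ x) * Equiv.swap w z * (Equiv.swap x (σ x) * Equiv.swap w z)
            = Equiv.swap x (σ x) * (Equiv.swap w z * Equiv.swap x (σ x)) * Equiv.swap w z := by
              group
          _ = Equiv.swap x (σ x) * (Equiv.swap x (σ x) * Equiv.swap w z) * Equiv.swap w z := by
              rw [hdisj.eq]
          _ = (Equiv.swap x (σ x) * Equiv.swap x (σ x)) * (Equiv.swap w z * Equiv.swap w z) := by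
              group
          _ = 1 := by rw [Equiv.swap_mul_self, Equiv.swap_mul_self, one_mul]
      · intro hone
        have : (Equiv.swap x (σ x) * Equiv.swap w z) x = x := by rw [hone]; rfl
        rw [Equiv.Perm.mul_apply, Equiv.swap_apply_of_ne_of_ne (Ne.symm hw.1) (Ne.symm hz.1),
          Equiv.swap_apply_left] at this
        exact hx this
    · rw [mul_assoc, Equiv.swap_mul_self, mul_one, ← hσswap]
  · push_neg at hs
    obtain ⟨y, hy, hyx, hyσx⟩ := hs
    set t := Equiv.swap x (σ x) with ht
    have hcomm : Commute σ t := by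
      have h1 : Equiv.swap (σ x) (σ (σ x)) = σ * t * σ⁻¹ := Equiv.swap_apply_apply σ x (σ x)
      rw [hσσ x, Equiv.swap_comm, ← ht] at h1
      show σ * t = t * σ
      have h2 : t * σ = σ * t := by
        conv_lhs => rw [h1]
        group
      exact h2.symm
    refine ⟨σ * t, t, ?_, swap_order_two (Ne.symm hx), ?_⟩
    · refine order_two_of ?_ ?_
      · calc σ * t * (σ * t) = σ * (t * σ) * t := by group
          _ = σ * (σ * t) * t := by rw [← hcomm.eq]
          _ = (σ * σ) * (t * t) := by group
          _ = 1 := by rw [hsq, ht, Equiv.swap_mul_self, one_mul]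
      · intro hone
        have : (σ * t) y = y := by rw [hone]; rfl
        rw [Equiv.Perm.mul_apply, ht, Equiv.swap_apply_of_ne_of_ne hyx hyσx] at this
        exact hy this
    · rw [mul_assoc, ht, Equiv.swap_mul_self, mul_one]

/-- For `n ≥ 4`, every element of the symmetric group `Sₙ` is a product of two
elements of order 2. -/
theorem perm_eq_mul_of_two_orderTwo (n : ℕ) (hn : 4 ≤ n) (σ : Equiv.Perm (Fin n)) :
    ∃ a b : Equiv.Perm (Fin n), orderOf a = 2 ∧ orderOf b = 2 ∧ σ = a * b := by
  classical
  by_cases h1 : σ = 1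
  · subst h1
    have h01 : (⟨0, by omega⟩ : Fin n) ≠ ⟨1, by omega⟩ := by
      simp [Fin.ext_iff]
    exact ⟨Equiv.swap ⟨0, by omega⟩ ⟨1, by omega⟩, Equiv.swap ⟨0, by omega⟩ ⟨1, by omega⟩,
      swap_order_two h01, swap_order_two h01, by rw [Equiv.swap_mul_self]⟩
  by_cases h2 : σ * σ = 1
  · exact invol_case hn σ h2 h1
  obtain ⟨τ, hτsq, hτconj, -⟩ := exists_reverser σ
  have hτne : τ ≠ 1 := by
    intro h
    rw [h, mul_one, one_mul] at hτconj
    apply h2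
    rw [show σ * σ = σ * σ⁻¹ from congrArg (σ * ·) hτconj]
    exact mul_inv_cancel σ
  have hστne : σ * τ ≠ 1 := by
    intro h
    have hτ : τ = σ⁻¹ := eq_inv_of_mul_eq_one_right h
    apply h2
    rw [hτ] at hτsq
    have := congrArg (·⁻¹) hτsq
    simpa [mul_inv_rev] using this
  refine ⟨σ * τ, τ, ?_, order_two_of hτsq hτne, ?_⟩
  · refine order_two_of ?_ hστne
    calc σ * τ * (σ * τ) = σ * (τ * σ * τ) := by group
      _ = σ * σ⁻¹ := by rw [hτconj]
      _ = 1 := mul_inv_cancel σ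
  · rw [mul_assoc, hτsq, mul_one]
end

section
/- Let n ≥ 2 with n ≠ 6. Then every automorphism of the symmetric group Sₙ is inner; that is, for every automorphism α of Sₙ there exists g ∈ Sₙ with α(σ) = gσg⁻¹ for all σ ∈ Sₙ. -/
open Equiv Equiv.Perm

section SwapLemmas

variable {β : Type*} [DecidableEq β]

set_option maxHeartbeats 1000000 in
private lemma cube_swap {a b c : β} (hab : a ≠ b) (hac : a ≠ c) (hbc : b ≠ c) :
    (swap a b * swap a c)^3 = 1 := by
  have key : ∀ x, (swap a b * swap a c) x
      = if x = a then c else if x = c then b else if x = b then a else x := by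
    intro x
    rcases eq_or_ne x a with rfl | hxa
    · simp [swap_apply_left, swap_apply_of_ne_of_ne hac.symm hbc.symm, hac]
    · rcases eq_or_ne x c with rfl | hxc
      · simp [swap_apply_right, swap_apply_left, hac, hxa]
      · rcases eq_or_ne x b with rfl | hxb
        · simp [swap_apply_of_ne_of_ne hxa hxc, swap_apply_right, hxa, hxc]
        · simp [swap_apply_of_ne_of_ne hxa hxc, swap_apply_of_ne_of_ne hxa hxb, hxa, hxb, hxc]
  ext x
  have h3 : ((swap a b * swap a c)^3) x
      = (swap a b * swap a c) ((swap a b * swap a c) ((swap a b * swap a c) x)) := by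
    rw [pow_succ, pow_succ, pow_one, Perm.mul_apply, Perm.mul_apply]
  rw [h3, key, key, key, Perm.one_apply]
  split_ifs <;> simp_all

set_option maxHeartbeats 1000000 in
private lemma triple_swap {a b c : β} (hab : a ≠ b) (hac : a ≠ c) (hbc : b ≠ c) :
    swap a b * swap a c * swap b c = swap a c := by
  ext x
  simp only [Perm.mul_apply, swap_apply_def]
  split_ifs <;> simp_all

private lemma pow6_of_cube {G : Type*} [Group G] {x : G} (h : x^3 = 1) : x^6 = 1 := by
  rw [show (6:ℕ) = 3*2 from rfl, pow_mul, h, one_pow]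
private lemma pow6_of_sq {G : Type*} [Group G] {x : G} (h : x^2 = 1) : x^6 = 1 := by
  rw [show (6:ℕ) = 2*3 from rfl, pow_mul, h, one_pow]

private lemma sq_swap_disjoint {a b c d : β} (hab : a ≠ b) (hcd : c ≠ d)
    (hac : a ≠ c) (had : a ≠ d) (hbc : b ≠ c) (hbd : b ≠ d) :
    (swap a b * swap c d)^2 = 1 := by
  have hcomm : Commute (swap a b) (swap c d) := by
    have hd : Perm.Disjoint (swap a b) (swap c d) := by
      intro x
      rcases eq_or_ne x a with rfl | hxa
      · right; exact swap_apply_of_ne_of_ne hac had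
      rcases eq_or_ne x b with rfl | hxb
      · right; exact swap_apply_of_ne_of_ne hbc hbd
      · left; exact swap_apply_of_ne_of_ne hxa hxb
    exact hd.commute
  rw [hcomm.mul_pow, pow_two, pow_two, swap_mul_self, swap_mul_self, one_mul]

private lemma pow6_swap_mul_swap {t1 t2 : Perm β}
    (h1 : t1.IsSwap) (h2 : t2.IsSwap) : (t1 * t2)^6 = 1 := by
  obtain ⟨a, b, hab, rfl⟩ := h1
  obtain ⟨c, d, hcd, rfl⟩ := h2
  by_cases hac : a = c
  · subst hac
    by_cases hbd : b = d
    · subst hbd; rw [swap_mul_self]; simp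
    · exact pow6_of_cube (cube_swap hab hcd hbd)
  by_cases had : a = d
  · subst had
    rw [swap_comm c a]
    by_cases hbc : b = c
    · subst hbc; rw [swap_mul_self]; simp
    · exact pow6_of_cube (cube_swap hab hac hbc)
  by_cases hbc : b = c
  · subst hbc
    rw [swap_comm a b]
    by_cases hbd : b = d
    · exact absurd hbd hcd
    · exact pow6_of_cube (cube_swap (fun h => hab h.symm) hbd (fun h => had h))
  by_cases hbd : b = d
  · subst hbd
    rw [swap_comm a b, swap_comm c b]
    exact pow6_of_cube (cube_swap (fun h => hab h.symm) (fun h => hbc h) (fun h => hac h))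
  · exact pow6_of_sq (sq_swap_disjoint hab hcd hac had hbc hbd)

/-- two distinct swaps whose product has order dividing 3 share a point -/
private lemma share_point {u v : Perm β} (hu : u.IsSwap) (hv : v.IsSwap)
    (hne : u ≠ v) (h3 : (u*v)^3 = 1) :
    ∃ p q r : β, p ≠ q ∧ p ≠ r ∧ q ≠ r ∧ u = swap p q ∧ v = swap p r := by
  obtain ⟨a, b, hab, rfl⟩ := hu
  obtain ⟨c, d, hcd, rfl⟩ := hv
  have hne' : ¬ ({a,b} : Set β) = {c,d} := by
    intro h
    apply hne
    rcases Set.pair_eq_pair_iff.mp h with ⟨rfl, rfl⟩ | ⟨rfl, rfl⟩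
    · rfl
    · exact swap_comm a b
  by_cases hac : a = c
  · subst hac
    exact ⟨a, b, d, hab, hcd, fun h => hne' (by rw [h]), rfl, rfl⟩
  by_cases had : a = d
  · subst had
    exact ⟨a, b, c, hab, fun h => hcd (h.symm), fun h => hne' (by rw [h, Set.pair_comm c a]),
      rfl, swap_comm c a⟩
  by_cases hbc : b = c
  · subst hbc
    exact ⟨b, a, d, fun h => hab h.symm, hcd, fun h => had (h ▸ rfl), swap_comm a b, rfl⟩
  by_cases hbd : b = d
  · subst hbd
    exact ⟨b, a, c, fun h => hab h.symm, fun h => hcd h.symm, fun h => hac (h ▸ rfl),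
      swap_comm a b, swap_comm c b⟩
  · exfalso
    have h2 : (swap a b * swap c d)^2 = 1 := sq_swap_disjoint hab hcd hac had hbc hbd
    have h1 : swap a b * swap c d = 1 := by
      have hstep : (swap a b * swap c d)^3 = (swap a b * swap c d)^2 * (swap a b * swap c d) := by
        rw [← pow_succ]
      rw [h3, h2, one_mul] at hstep
      exact hstep.symm
    have heq : swap a b = swap c d := by
      have := congrArg (· * (swap c d)⁻¹) h1
      simpa [mul_assoc] using this
    exact hne heq

private lemma isSwap_conj {g t : Perm β} (h : t.IsSwap) : (g * t * g⁻¹).IsSwap := by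
  obtain ⟨a, b, hab, rfl⟩ := h
  exact ⟨g a, g b, fun hh => hab (g.injective hh), (swap_apply_apply g a b).symm⟩

end SwapLemmas

section CycleTypeLemmas

variable {β : Type*} [Fintype β] [DecidableEq β]

private lemma cycleType_of_sq {σ : Perm β} (h2 : σ^2 = 1) (h1 : σ ≠ 1) :
    ∃ k, 1 ≤ k ∧ σ.cycleType = Multiset.replicate k 2 ∧ σ.support.card = 2*k := by
  haveI : Fact (Nat.Prime 2) := ⟨Nat.prime_two⟩
  have ho : orderOf σ = 2 := orderOf_eq_prime h2 h1
  obtain ⟨m, hm⟩ := Equiv.Perm.cycleType_prime_order (ho ▸ Nat.prime_two)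
  rw [ho] at hm
  refine ⟨m+1, le_add_self, hm, ?_⟩
  have hsum := σ.sum_cycleType
  rw [hm, Multiset.sum_replicate, smul_eq_mul] at hsum
  omega

private lemma isSwap_iff_cycleType {σ : Perm β} : σ.IsSwap ↔ σ.cycleType = {2} := by
  constructor
  · rintro ⟨a, b, hab, rfl⟩
    rw [(isCycle_swap hab).cycleType, support_swap hab]
    simp [Finset.card_insert_of_notMem, hab]
  · intro h
    rw [← card_support_eq_two, ← σ.sum_cycleType, h]
    rfl

end CycleTypeLemmas

section Witnesses

private def fW (k x : ℕ) : ℕ := if x < 2*k then (if x % 2 = 0 then x+1 else x-1) else x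
private def gWA (k x : ℕ) : ℕ :=
  if x = 1 then 2 else if x = 2 then 1 else if x = 3 then 2*k else if x = 2*k then 3
  else if 4 ≤ x ∧ x < 2*k then (if x % 2 = 0 then x+1 else x-1) else x
private def gWB (k x : ℕ) : ℕ :=
  if x = 0 then 7 else if x = 7 then 0 else if 1 ≤ x ∧ x ≤ 6 then (if x % 2 = 0 then x-1 else x+1)
  else if 8 ≤ x ∧ x < 2*k then (if x % 2 = 0 then x+1 else x-1) else x

variable {n k : ℕ}

private lemma fW_ev {x y : ℕ}
    (h : (x < 2*k ∧ ((x % 2 = 0 ∧ y = x+1) ∨ (x % 2 = 1 ∧ y = x-1))) ∨ (¬ x < 2*k ∧ y = x)) :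
    fW k x = y := by unfold fW; split_ifs <;> omega

private lemma gWA_ev {x y : ℕ} (hk : 2 ≤ k)
    (h : (x = 1 ∧ y = 2) ∨ (x = 2 ∧ y = 1) ∨ (x = 3 ∧ y = 2*k) ∨ (x = 2*k ∧ y = 3)
      ∨ (4 ≤ x ∧ x < 2*k ∧ ((x % 2 = 0 ∧ y = x+1) ∨ (x % 2 = 1 ∧ y = x-1)))
      ∨ ((x = 0 ∨ (2*k < x ∧ x ≠ 3)) ∧ y = x)) :
    gWA k x = y := by unfold gWA; split_ifs <;> omega

private lemma gWB_ev {x y : ℕ} (hk : 4 ≤ k)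
    (h : (x = 0 ∧ y = 7) ∨ (x = 7 ∧ y = 0)
      ∨ (1 ≤ x ∧ x ≤ 6 ∧ ((x % 2 = 0 ∧ y = x-1) ∨ (x % 2 = 1 ∧ y = x+1)))
      ∨ (8 ≤ x ∧ x < 2*k ∧ ((x % 2 = 0 ∧ y = x+1) ∨ (x % 2 = 1 ∧ y = x-1)))
      ∨ (2*k ≤ x ∧ y = x)) :
    gWB k x = y := by unfold gWB; split_ifs <;> omega

private lemma fW_bound (hn : 2*k ≤ n) : ∀ x, x < n → fW k x < n := by
  intro x hx; unfold fW; split_ifs <;> omega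
private lemma fW_inv : ∀ x, x < n → fW k (fW k x) = x := by
  intro x _
  rcases Nat.lt_or_ge x (2*k) with h | h
  · rcases Nat.mod_two_eq_zero_or_one x with he | ho
    · rw [show fW k x = x+1 from fW_ev (by omega)]; exact fW_ev (by omega)
    · rw [show fW k x = x-1 from fW_ev (by omega)]; exact fW_ev (by omega)
  · rw [show fW k x = x from fW_ev (by omega)]; exact fW_ev (by omega)
private lemma fW_supp : ∀ x, x < n → (fW k x ≠ x ↔ (0 ≤ x ∧ x < 2*k)) := by
  intro x hx; unfold fW; split_ifs <;> omega

private lemma gWA_bound (hk : 2 ≤ k) (hn : 2*k+1 ≤ n) : ∀ x, x < n → gWA k x < n := by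
  intro x hx; unfold gWA; split_ifs <;> omega
private lemma gWA_inv (hk : 2 ≤ k) : ∀ x, x < n → gWA k (gWA k x) = x := by
  intro x _
  by_cases h1 : x = 1
  · rw [show gWA k x = 2 from gWA_ev hk (by omega)]; exact gWA_ev hk (by omega)
  by_cases h2 : x = 2
  · rw [show gWA k x = 1 from gWA_ev hk (by omega)]; exact gWA_ev hk (by omega)
  by_cases h3 : x = 3
  · rw [show gWA k x = 2*k from gWA_ev hk (by omega)]; exact gWA_ev hk (by omega)
  by_cases h4 : x = 2*k
  · rw [show gWA k x = 3 from gWA_ev hk (by omega)]; exact gWA_ev hk (by omega)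
  by_cases h5 : 4 ≤ x ∧ x < 2*k
  · rcases Nat.mod_two_eq_zero_or_one x with he | ho
    · rw [show gWA k x = x+1 from gWA_ev hk (by omega)]; exact gWA_ev hk (by omega)
    · rw [show gWA k x = x-1 from gWA_ev hk (by omega)]; exact gWA_ev hk (by omega)
  · rw [show gWA k x = x from gWA_ev hk (by omega)]; exact gWA_ev hk (by omega)
private lemma gWA_supp (hk : 2 ≤ k) : ∀ x, x < n → (gWA k x ≠ x ↔ (1 ≤ x ∧ x < 2*k+1)) := by
  intro x hx; unfold gWA; split_ifs <;> omega

private lemma gWB_bound (hk : 4 ≤ k) (hn : 2*k ≤ n) : ∀ x, x < n → gWB k x < n := by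
  intro x hx; unfold gWB; split_ifs <;> omega
private lemma gWB_inv (hk : 4 ≤ k) : ∀ x, x < n → gWB k (gWB k x) = x := by
  intro x _
  by_cases h1 : x = 0
  · rw [show gWB k x = 7 from gWB_ev hk (by omega)]; exact gWB_ev hk (by omega)
  by_cases h2 : x = 7
  · rw [show gWB k x = 0 from gWB_ev hk (by omega)]; exact gWB_ev hk (by omega)
  by_cases h3 : 1 ≤ x ∧ x ≤ 6
  · rcases Nat.mod_two_eq_zero_or_one x with he | ho
    · rw [show gWB k x = x-1 from gWB_ev hk (by omega)]; exact gWB_ev hk (by omega)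
    · rw [show gWB k x = x+1 from gWB_ev hk (by omega)]; exact gWB_ev hk (by omega)
  by_cases h4 : 8 ≤ x ∧ x < 2*k
  · rcases Nat.mod_two_eq_zero_or_one x with he | ho
    · rw [show gWB k x = x+1 from gWB_ev hk (by omega)]; exact gWB_ev hk (by omega)
    · rw [show gWB k x = x-1 from gWB_ev hk (by omega)]; exact gWB_ev hk (by omega)
  · rw [show gWB k x = x from gWB_ev hk (by omega)]; exact gWB_ev hk (by omega)
private lemma gWB_supp (hk : 4 ≤ k) : ∀ x, x < n → (gWB k x ≠ x ↔ (0 ≤ x ∧ x < 2*k)) := by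
  intro x hx; unfold gWB; split_ifs <;> omega

private lemma card_filter_Ico {n a b : ℕ} (hb : b ≤ n) :
    ((Finset.univ : Finset (Fin n)).filter (fun (x : Fin n) => a ≤ (x:ℕ) ∧ (x:ℕ) < b)).card
      = b - a := by
  rw [← Nat.card_Ico a b]
  apply Finset.card_bij (fun (x : Fin n) _ => (x : ℕ))
  · intro x hx; simp only [Finset.mem_filter] at hx; exact Finset.mem_Ico.mpr hx.2
  · intro x hx y hy h; exact Fin.ext h
  · intro y hy
    rw [Finset.mem_Ico] at hy
    exact ⟨⟨y, lt_of_lt_of_le hy.2 hb⟩, by simp [hy.1, hy.2], rfl⟩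

private def liftInv (f : ℕ → ℕ) (hb : ∀ x, x < n → f x < n) (hi : ∀ x, x < n → f (f x) = x) :
    Perm (Fin n) :=
  Function.Involutive.toPerm (fun x => ⟨f x.val, hb x.val x.isLt⟩)
    (fun x => Fin.ext (hi x.val x.isLt))

private lemma liftInv_apply (f : ℕ → ℕ) (hb : ∀ x, x < n → f x < n)
    (hi : ∀ x, x < n → f (f x) = x) (x : Fin n) :
    liftInv f hb hi x = ⟨f x.val, hb x.val x.isLt⟩ := rfl

private lemma liftInv_sq (f : ℕ → ℕ) (hb : ∀ x, x < n → f x < n)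
    (hi : ∀ x, x < n → f (f x) = x) : (liftInv f hb hi)^2 = 1 := by
  ext x
  simp only [pow_two, Perm.mul_apply, liftInv_apply, Perm.one_apply, hi x.val x.isLt]

private lemma liftInv_support_card (f : ℕ → ℕ) (hb : ∀ x, x < n → f x < n)
    (hi : ∀ x, x < n → f (f x) = x) {a b : ℕ} (hbn : b ≤ n)
    (hsupp : ∀ x, x < n → (f x ≠ x ↔ (a ≤ x ∧ x < b))) :
    (liftInv f hb hi).support.card = b - a := by
  rw [← card_filter_Ico (n := n) hbn]
  congr 1
  ext x
  simp only [Equiv.Perm.mem_support, Finset.mem_filter, Finset.mem_univ, true_and,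
    liftInv_apply, Ne, Fin.ext_iff]
  exact hsupp x.val x.isLt

private lemma cycleType_of_liftInv (f : ℕ → ℕ) (hb : ∀ x, x < n → f x < n)
    (hi : ∀ x, x < n → f (f x) = x) {a b : ℕ} (hbn : b ≤ n)
    (hsupp : ∀ x, x < n → (f x ≠ x ↔ (a ≤ x ∧ x < b))) (hcard : b - a = 2*k) (hk : 1 ≤ k) :
    (liftInv f hb hi).cycleType = Multiset.replicate k 2 := by
  have hs := liftInv_support_card f hb hi hbn hsupp
  rw [hcard] at hs
  have hne : liftInv f hb hi ≠ 1 := by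
    intro h
    rw [h, Equiv.Perm.support_one] at hs
    simp only [Finset.card_empty] at hs
    omega
  obtain ⟨k', hk', hct, hcard'⟩ := cycleType_of_sq (liftInv_sq f hb hi) hne
  rw [hs] at hcard'
  have hkk : k' = k := by omega
  rw [hct, hkk]

/-- witness for the case 2k+1 ≤ n -/
private lemma witnessA (hk : 2 ≤ k) (hn : 2*k+1 ≤ n) :
    ∃ σ τ : Perm (Fin n), σ.cycleType = Multiset.replicate k 2
      ∧ τ.cycleType = Multiset.replicate k 2 ∧ (σ*τ)^6 ≠ 1 := by
  have hn' : 2*k ≤ n := by omega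
  set σ := liftInv (fW k) (fW_bound hn') fW_inv with hσ
  set τ := liftInv (gWA k) (gWA_bound hk hn) (gWA_inv hk) with hτ
  refine ⟨σ, τ, ?_, ?_, ?_⟩
  · exact cycleType_of_liftInv _ _ _ hn' fW_supp (by omega) (by omega)
  · exact cycleType_of_liftInv _ _ _ (by omega : 2*k+1 ≤ n) (gWA_supp hk) (by omega) (by omega)
  · -- evaluate orbit of 0 : 0 → 1 → 3 → 2k → 2 → 0 → 1
    have h0 : (0:ℕ) < n := by omega
    have h1 : (1:ℕ) < n := by omega
    have h2 : (2:ℕ) < n := by omega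
    have h3 : (3:ℕ) < n := by omega
    have h2k : 2*k < n := by omega
    have step : ∀ (v : Fin n) (w : ℕ) (hw : w < n),
        fW k (gWA k v.val) = w → (σ*τ) v = ⟨w, hw⟩ := by
      intro v w hw h
      exact Fin.ext h
    have e0 : (σ*τ) ⟨0,h0⟩ = ⟨1,h1⟩ := step _ 1 h1
      (by rw [show gWA k 0 = 0 from gWA_ev hk (by omega)]; exact fW_ev (by omega))
    have e1 : (σ*τ) ⟨1,h1⟩ = ⟨3,h3⟩ := step _ 3 h3
      (by rw [show gWA k 1 = 2 from gWA_ev hk (by omega)]; exact fW_ev (by omega))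
    have e3 : (σ*τ) ⟨3,h3⟩ = ⟨2*k,h2k⟩ := step _ (2*k) h2k
      (by rw [show gWA k 3 = 2*k from gWA_ev hk (by omega)]; exact fW_ev (by omega))
    have ek : (σ*τ) ⟨2*k,h2k⟩ = ⟨2,h2⟩ := step _ 2 h2
      (by rw [show gWA k (2*k) = 3 from gWA_ev hk (by omega)]; exact fW_ev (by omega))
    have e2 : (σ*τ) ⟨2,h2⟩ = ⟨0,h0⟩ := step _ 0 h0
      (by rw [show gWA k 2 = 1 from gWA_ev hk (by omega)]; exact fW_ev (by omega))
    intro hcon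
    have hfix : ((σ*τ)^6) ⟨0,h0⟩ = ⟨0,h0⟩ := by rw [hcon]; rfl
    rw [show ((σ*τ)^6) ⟨0,h0⟩
        = (σ*τ) ((σ*τ) ((σ*τ) ((σ*τ) ((σ*τ) ((σ*τ) ⟨0,h0⟩))))) from by
      simp only [pow_succ, pow_zero, one_mul, Perm.mul_apply]] at hfix
    rw [e0, e1, e3, ek, e2, e0] at hfix
    simp only [Fin.mk.injEq] at hfix
    omega

/-- witness for the case 4 ≤ k, 2k ≤ n -/
private lemma witnessB (hk : 4 ≤ k) (hn : 2*k ≤ n) :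
    ∃ σ τ : Perm (Fin n), σ.cycleType = Multiset.replicate k 2
      ∧ τ.cycleType = Multiset.replicate k 2 ∧ (σ*τ)^6 ≠ 1 := by
  set σ := liftInv (fW k) (fW_bound hn) fW_inv with hσ
  set τ := liftInv (gWB k) (gWB_bound hk hn) (gWB_inv hk) with hτ
  refine ⟨σ, τ, ?_, ?_, ?_⟩
  · exact cycleType_of_liftInv _ _ _ hn fW_supp (by omega) (by omega)
  · exact cycleType_of_liftInv _ _ _ hn (gWB_supp hk) (by omega) (by omega)
  · -- orbit of 0 : 0 → 6 → 4 → 2 → 0 → 6 → 4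
    have h0 : (0:ℕ) < n := by omega
    have h2 : (2:ℕ) < n := by omega
    have h4 : (4:ℕ) < n := by omega
    have h6 : (6:ℕ) < n := by omega
    have step : ∀ (v : Fin n) (w : ℕ) (hw : w < n),
        fW k (gWB k v.val) = w → (σ*τ) v = ⟨w, hw⟩ := by
      intro v w hw h
      exact Fin.ext h
    have e0 : (σ*τ) ⟨0,h0⟩ = ⟨6,h6⟩ := step _ 6 h6
      (by rw [show gWB k 0 = 7 from gWB_ev hk (by omega)]; exact fW_ev (by omega))
    have e6 : (σ*τ) ⟨6,h6⟩ = ⟨4,h4⟩ := step _ 4 h4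
      (by rw [show gWB k 6 = 5 from gWB_ev hk (by omega)]; exact fW_ev (by omega))
    have e4 : (σ*τ) ⟨4,h4⟩ = ⟨2,h2⟩ := step _ 2 h2
      (by rw [show gWB k 4 = 3 from gWB_ev hk (by omega)]; exact fW_ev (by omega))
    have e2 : (σ*τ) ⟨2,h2⟩ = ⟨0,h0⟩ := step _ 0 h0
      (by rw [show gWB k 2 = 1 from gWB_ev hk (by omega)]; exact fW_ev (by omega))
    intro hcon
    have hfix : ((σ*τ)^6) ⟨0,h0⟩ = ⟨0,h0⟩ := by rw [hcon]; rfl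
    rw [show ((σ*τ)^6) ⟨0,h0⟩
        = (σ*τ) ((σ*τ) ((σ*τ) ((σ*τ) ((σ*τ) ((σ*τ) ⟨0,h0⟩))))) from by
      simp only [pow_succ, pow_zero, one_mul, Perm.mul_apply]] at hfix
    rw [e0, e6, e4, e2, e0, e6] at hfix
    simp only [Fin.mk.injEq] at hfix
    omega

end Witnesses

set_option maxRecDepth 100000 in
set_option maxHeartbeats 2000000 in
private lemma klein4 : ∀ x y : Equiv.Perm (Fin 4), x*x = 1 → y*y = 1 →
    (∀ v, x v ≠ v) → (∀ v, y v ≠ v) → (x*y)*(x*y) = 1 := by decide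

section Part1

/-- Every automorphism of Sₙ (2 ≤ n ≠ 6) maps transpositions to transpositions. -/
private lemma aut_isSwap {n : ℕ} (h2 : 2 ≤ n) (h6 : n ≠ 6) (α : MulAut (Perm (Fin n)))
    {t : Perm (Fin n)} (ht : t.IsSwap) : (α t).IsSwap := by
  have hz01 : (⟨0, by omega⟩ : Fin n) ≠ ⟨1, by omega⟩ := by simp [Fin.ext_iff]
  set z0 : Fin n := ⟨0, by omega⟩
  set z1 : Fin n := ⟨1, by omega⟩
  set t0 : Perm (Fin n) := swap z0 z1 with ht0
  suffices h : (α t0).IsSwap by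
    have hconj : IsConj t t0 := by
      apply Equiv.Perm.isConj_of_cycleType_eq
      rw [_root_.isSwap_iff_cycleType.mp ht, _root_.isSwap_iff_cycleType.mp ⟨z0, z1, hz01, rfl⟩]
    obtain ⟨c, hc⟩ := isConj_iff.mp hconj.symm
    have he : α t = (α c) * (α t0) * (α c)⁻¹ := by
      rw [← map_inv, ← map_mul, ← map_mul, hc]
    rw [he]
    exact isSwap_conj h
  by_contra hnot
  have hu1 : α t0 ≠ 1 := by
    intro h
    have h1 : t0 = 1 := by simpa using congrArg α.symm h
    exact hz01 (swap_eq_one_iff.mp h1)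
  have hu2 : (α t0)^2 = 1 := by
    rw [pow_two, ← map_mul, ht0, swap_mul_self, map_one]
  obtain ⟨k, hk1, hct, hcard⟩ := cycleType_of_sq hu2 hu1
  have hk2 : 2 ≤ k := by
    by_contra h
    have hk1' : k = 1 := by omega
    apply hnot
    apply _root_.isSwap_iff_cycleType.mpr
    rw [hct, hk1', Multiset.replicate_one]
  have hkn : 2*k ≤ n := by
    have hle := (α t0).support.card_le_univ
    rw [hcard, Fintype.card_fin] at hle
    exact hle
  have hwitness : ∃ σ τ : Perm (Fin n), σ.cycleType = Multiset.replicate k 2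
      ∧ τ.cycleType = Multiset.replicate k 2 ∧ (σ*τ)^6 ≠ 1 := by
    rcases Nat.lt_or_ge (2*k) n with hlt | hge
    · exact witnessA hk2 (by omega)
    · have hn2k : n = 2*k := by omega
      rcases Nat.lt_or_ge k 4 with hk4 | hk4
      · -- n = 2k, k ∈ {2,3} : since n ≠ 6, n = 4 : Klein four-group case
        exfalso
        have hn4 : n = 4 := by omega
        have h2n : (2:ℕ) < n := by omega
        have hz02 : z0 ≠ (⟨2, h2n⟩ : Fin n) := by simp [Fin.ext_iff]
        have hz12 : z1 ≠ (⟨2, h2n⟩ : Fin n) := by simp [Fin.ext_iff, z1]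
        set z2 : Fin n := ⟨2, h2n⟩ with hz2
        set t1 : Perm (Fin n) := swap z0 z2 with ht1
        have hy2 : (α t1)^2 = 1 := by rw [pow_two, ← map_mul, ht1, swap_mul_self, map_one]
        have hy1 : α t1 ≠ 1 := by
          intro h
          have h1 : t1 = 1 := by simpa using congrArg α.symm h
          exact hz02 (swap_eq_one_iff.mp h1)
        have hyct : (α t1).cycleType = Multiset.replicate k 2 := by
          have hconj : IsConj t0 t1 := by
            apply Equiv.Perm.isConj_of_cycleType_eq
            rw [_root_.isSwap_iff_cycleType.mp ⟨z0, z1, hz01, rfl⟩,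
              _root_.isSwap_iff_cycleType.mp ⟨z0, z2, hz02, rfl⟩]
          obtain ⟨c, hc⟩ := isConj_iff.mp hconj
          have he : α t1 = (α c) * (α t0) * (α c)⁻¹ := by
            rw [← map_inv, ← map_mul, ← map_mul, hc]
          rw [he, Equiv.Perm.cycleType_conj, hct]
        have hk2' : k = 2 := by omega
        have hycard : (α t1).support.card = 4 := by
          have hsum := (α t1).sum_cycleType
          rw [hyct, Multiset.sum_replicate, smul_eq_mul, hk2'] at hsum
          omega
        have hxcard : (α t0).support.card = 4 := by rw [hcard, hk2']
        have hxfree : ∀ v, (α t0) v ≠ v := by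
          intro v
          have huniv : (α t0).support = Finset.univ :=
            Finset.eq_univ_of_card _ (by rw [hxcard, Fintype.card_fin, hn4])
          exact Equiv.Perm.mem_support.mp (huniv ▸ Finset.mem_univ v)
        have hyfree : ∀ v, (α t1) v ≠ v := by
          intro v
          have huniv : (α t1).support = Finset.univ :=
            Finset.eq_univ_of_card _ (by rw [hycard, Fintype.card_fin, hn4])
          exact Equiv.Perm.mem_support.mp (huniv ▸ Finset.mem_univ v)
        subst hn4
        have hxy := klein4 (α t0) (α t1) (by rw [← pow_two]; exact hu2)
          (by rw [← pow_two]; exact hy2) hxfree hyfree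
        have hQ : ((t0*t1)*(t0*t1)) = 1 := by
          apply α.injective
          rw [map_one]
          simp only [map_mul]
          exact hxy
        have ha1 : (t0*t1) z0 = z2 := by
          rw [ht0, ht1, Perm.mul_apply, swap_apply_left,
            swap_apply_of_ne_of_ne (fun h => hz02 h.symm) (fun h => hz12 h.symm)]
        have ha2 : (t0*t1) z2 = z1 := by
          rw [ht0, ht1, Perm.mul_apply, swap_apply_right, swap_apply_left]
        have hfix : (t0*t1) ((t0*t1) z0) = z0 := by
          have := congrArg (fun π : Perm (Fin 4) => π z0) hQ
          simpa [Perm.mul_apply] using this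
        rw [ha1, ha2] at hfix
        exact hz01 hfix.symm
      · exact witnessB hk4 hkn
  obtain ⟨σ, τ, hσ, hτ, h6ne⟩ := hwitness
  have hpull : ∀ ρ : Perm (Fin n), ρ.cycleType = Multiset.replicate k 2 → (α.symm ρ).IsSwap := by
    intro ρ hρ
    have hconj : IsConj (α t0) ρ :=
      Equiv.Perm.isConj_of_cycleType_eq (by rw [hct, hρ])
    obtain ⟨c, hc⟩ := isConj_iff.mp hconj
    have he : α.symm ρ = (α.symm c) * t0 * (α.symm c)⁻¹ := by
      apply α.injective
      rw [MulEquiv.apply_symm_apply, map_mul, map_mul, map_inv, MulEquiv.apply_symm_apply, hc]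
    rw [he]
    exact isSwap_conj ⟨z0, z1, hz01, rfl⟩
  have hs1 := hpull σ hσ
  have hs2 := hpull τ hτ
  have h61 : ((α.symm σ) * (α.symm τ))^6 = 1 := pow6_swap_mul_swap hs1 hs2
  apply h6ne
  have hone : α.symm ((σ*τ)^6) = 1 := by
    rw [map_pow, map_mul]
    exact h61
  have := congrArg α hone
  simpa using this

end Part1

/-- For `n ≥ 2`, `n ≠ 6`, every automorphism of the symmetric group `Sₙ` is inner. -/
theorem perm_aut_inner_of_ne_six (n : ℕ) (h2 : 2 ≤ n) (h6 : n ≠ 6)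
    (α : MulAut (Equiv.Perm (Fin n))) :
    ∃ g : Equiv.Perm (Fin n), ∀ σ : Equiv.Perm (Fin n), α σ = g * σ * g⁻¹ := by
  by_cases hn2 : n = 2
  · subst hn2
    refine ⟨1, fun σ => ?_⟩
    have hall : ∀ x : Perm (Fin 2), x = 1 ∨ x = swap 0 1 := by decide
    rcases hall σ with rfl | rfl
    · simp
    · rcases hall (α (swap 0 1)) with h | h
      · exfalso
        have h1 : (swap 0 1 : Perm (Fin 2)) = 1 := by
          simpa using congrArg α.symm h
        exact absurd h1 (by decide)
      · rw [h]; group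
  -- n ≥ 3
  have h3 : 3 ≤ n := by omega
  have hswap : ∀ t : Perm (Fin n), t.IsSwap → (α t).IsSwap :=
    fun t ht => aut_isSwap h2 h6 α ht
  have hz01 : (⟨0, by omega⟩ : Fin n) ≠ ⟨1, by omega⟩ := by simp [Fin.ext_iff]
  have hz02 : (⟨0, by omega⟩ : Fin n) ≠ ⟨2, by omega⟩ := by simp [Fin.ext_iff]
  have hz12 : (⟨1, by omega⟩ : Fin n) ≠ ⟨2, by omega⟩ := by simp [Fin.ext_iff]
  set z0 : Fin n := ⟨0, by omega⟩
  set z1 : Fin n := ⟨1, by omega⟩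
  set z2 : Fin n := ⟨2, by omega⟩
  have hs : ∀ i, i ≠ z0 → (α (swap z0 i)).IsSwap := by
    intro i hi
    exact hswap _ ⟨z0, i, fun h => hi h.symm, rfl⟩
  have hsinj : ∀ i j, α (swap z0 i) = α (swap z0 j) → i = j := by
    intro i j h
    have h1 : swap z0 i = swap z0 j := α.injective h
    have := congrArg (fun π : Perm (Fin n) => π z0) h1
    simpa [swap_apply_left] using this
  have horder : ∀ i j, i ≠ z0 → j ≠ z0 → i ≠ j →
      (α (swap z0 i) * α (swap z0 j))^3 = 1 := by
    intro i j hi hj hij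
    have hc : (swap z0 i * swap z0 j)^3 = 1 :=
      cube_swap (fun h => hi h.symm) (fun h => hj h.symm) hij
    rw [← map_mul, ← map_pow, hc, map_one]
  have hshare : ∀ i j, i ≠ z0 → j ≠ z0 → i ≠ j →
      ∃ p q r, p ≠ q ∧ p ≠ r ∧ q ≠ r ∧ α (swap z0 i) = swap p q ∧ α (swap z0 j) = swap p r := by
    intro i j hi hj hij
    exact share_point (hs i hi) (hs j hj)
      (fun h => hij (hsinj _ _ h)) (horder i j hi hj hij)
  obtain ⟨a, b, c, hab, hac, hbc, hs1, hs2⟩ :=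
    hshare z1 z2 (fun h => hz01 h.symm) (fun h => hz02 h.symm) hz12
  -- every α (swap z0 i) (i ≠ z0) is a swap containing a
  have hspec : ∀ i, i ≠ z0 → ∃ y, y ≠ a ∧ α (swap z0 i) = swap a y := by
    intro i hi
    by_cases hi1 : i = z1
    · exact ⟨b, fun h => hab h.symm, by rw [hi1, hs1]⟩
    by_cases hi2 : i = z2
    · exact ⟨c, fun h => hac h.symm, by rw [hi2, hs2]⟩
    obtain ⟨p, q, r, hpq, hpr, hqr, hp1, hpi⟩ :=
      hshare z1 i (fun h => hz01 h.symm) hi (fun h => hi1 h.symm)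
    have hpmem : p = a ∨ p = b := by
      have hm : p ∈ ({a, b} : Finset (Fin n)) := by
        rw [← support_swap hab, ← hs1, hp1, support_swap hpq]
        exact Finset.mem_insert_self p {q}
      simpa using hm
    rcases hpmem with rfl | rfl
    · exact ⟨r, fun h => hpr h.symm, hpi⟩
    · by_cases hra : r = a
      · exfalso
        rw [hra, swap_comm p a] at hpi
        exact hi1 (hsinj i z1 (hpi.trans hs1.symm))
      obtain ⟨p', q', r', hpq', hpr', hqr', hp2, hpi'⟩ :=
        hshare z2 i (fun h => hz02 h.symm) hi (fun h => hi2 h.symm)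
      have hpmem' : p' = a ∨ p' = c := by
        have hm : p' ∈ ({a, c} : Finset (Fin n)) := by
          rw [← support_swap hac, ← hs2, hp2, support_swap hpq']
          exact Finset.mem_insert_self p' {q'}
        simpa using hm
      rcases hpmem' with rfl | rfl
      · exact ⟨r', fun h => hpr' h.symm, hpi'⟩
      · exfalso
        -- α (swap z0 i) = swap p r and = swap p' r' : hence = swap p p'
        have hcmem : p' = p ∨ p' = r := by
          have hm : p' ∈ ({p, r} : Finset (Fin n)) := by
            rw [← support_swap hpr, ← hpi, hpi', support_swap hpr']
            exact Finset.mem_insert_self p' {r'}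
          simpa using hm
        have hrc : r = p' := by
          rcases hcmem with h | h
          · exact absurd h hbc.symm
          · exact h.symm
        rw [hrc] at hpi
        have hQac : α (swap z0 z1 * swap z0 z2 * swap z0 i) = swap a p' := by
          rw [map_mul, map_mul, hs1, hs2, hpi]
          exact triple_swap hab hac hbc
        have hQ : (swap z0 z1 * swap z0 z2 * swap z0 i)
            * (swap z0 z1 * swap z0 z2 * swap z0 i) = 1 := by
          apply α.injective
          rw [map_one, map_mul, hQac, swap_mul_self]
        have hQz0 : (swap z0 z1 * swap z0 z2 * swap z0 i) z0 = i := by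
          rw [Perm.mul_apply, swap_apply_left, Perm.mul_apply,
            swap_apply_of_ne_of_ne hi (fun h => hi2 h),
            swap_apply_of_ne_of_ne hi (fun h => hi1 h)]
        have hQi : (swap z0 z1 * swap z0 z2 * swap z0 i) i = z2 := by
          rw [Perm.mul_apply, swap_apply_right, Perm.mul_apply, swap_apply_left,
            swap_apply_of_ne_of_ne (fun h => hz02 h.symm) (fun h => hz12 h.symm)]
        have hfix : (swap z0 z1 * swap z0 z2 * swap z0 i)
            ((swap z0 z1 * swap z0 z2 * swap z0 i) z0) = z0 := by
          have := congrArg (fun π : Perm (Fin n) => π z0) hQ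
          simpa [Perm.mul_apply] using this
        rw [hQz0, hQi] at hfix
        exact hz02 hfix.symm
  -- construct the conjugating permutation g
  let yf : Fin n → Fin n := fun i => if h : i = z0 then a else Classical.choose (hspec i h)
  have hyf0 : yf z0 = a := dif_pos rfl
  have hyf : ∀ i (hi : i ≠ z0), yf i ≠ a ∧ α (swap z0 i) = swap a (yf i) := by
    intro i hi
    have hsp := Classical.choose_spec (hspec i hi)
    simpa [yf, dif_neg hi] using hsp
  have hyinj : Function.Injective yf := by
    intro i j h
    by_cases hi : i = z0 <;> by_cases hj : j = z0
    · rw [hi, hj]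
    · exact absurd (by rw [← h, hi, hyf0]) (hyf j hj).1
    · exact absurd (by rw [h, hj, hyf0]) (hyf i hi).1
    · exact hsinj i j (by rw [(hyf i hi).2, (hyf j hj).2, h])
  let g : Perm (Fin n) := Equiv.ofBijective yf (Finite.injective_iff_bijective.mp hyinj)
  have hgapp : ∀ v, g v = yf v := fun v => rfl
  have hgen : ∀ i, i ≠ z0 → α (swap z0 i) = g * swap z0 i * g⁻¹ := by
    intro i hi
    rw [← swap_apply_apply g z0 i, hgapp, hgapp, hyf0, ← (hyf i hi).2]
  refine ⟨g, fun σ => ?_⟩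
  have hmem : σ ∈ Subgroup.closure {τ : Perm (Fin n) | τ.IsSwap} := by
    rw [Equiv.Perm.closure_isSwap]; exact Subgroup.mem_top σ
  refine Subgroup.closure_induction ?_ ?_ ?_ ?_ hmem
  · rintro u ⟨x, y', hxy, rfl⟩
    by_cases hx0 : x = z0
    · subst hx0; exact hgen y' (fun h => hxy h.symm)
    by_cases hy0 : y' = z0
    · subst hy0; rw [swap_comm]; exact hgen x hx0
    · have hrepr : swap x y' = swap z0 x * swap z0 y' * (swap z0 x)⁻¹ := by
        rw [← swap_apply_apply (swap z0 x) z0 y', swap_apply_left,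
          swap_apply_of_ne_of_ne hy0 (fun h => hxy h.symm)]
      rw [hrepr, map_mul, map_mul, map_inv, hgen x hx0, hgen y' hy0]
      group
  · simp
  · intro x y' _ _ hx hy'
    rw [map_mul, hx, hy']
    group
  · intro x _ hx
    rw [map_inv, hx]
    group
end

section
/- Let p and q be (not necessarily distinct) primes and let G be a finite group of order pⁿq with n ≥ 1. Then G is not simple: G contains a normal subgroup that is neither the trivial subgroup nor all of G. -/
section Aux

variable {G : Type*} [Group G]

private lemma aux_card_lt_of_lt [Finite G] {H K : Subgroup G} (h : H < K) :
    Nat.card H < Nat.card K :=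
  lt_of_le_of_ne (Subgroup.card_le_of_le h.le)
    (fun he => h.ne (Subgroup.eq_of_le_of_card_ge h.le he.ge))

/-- In a finite `p`-group, strict subgroups have strictly larger normalizers. -/
private lemma aux_lt_inf_normalizer [Finite G] {p : ℕ} [Fact p.Prime]
    {P D : Subgroup G} (hP : IsPGroup p P) (hlt : D < P) :
    D < P ⊓ (Subgroup.normalizer (D : Set G)) := by
  haveI : Group.IsNilpotent ↥P := hP.isNilpotent
  have hnc : NormalizerCondition ↥P := normalizerCondition_of_isNilpotent
  set D' : Subgroup ↥P := D.subgroupOf P with hD'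
  have hD'top : D' ≠ ⊤ := by
    intro h
    rw [hD', Subgroup.subgroupOf_eq_top] at h
    exact (not_le_of_gt hlt) h
  have hlt' := hnc D' (lt_top_iff_ne_top.mpr hD'top)
  obtain ⟨x, hxn, hxD⟩ := SetLike.exists_of_lt hlt'
  have hxnorm : (x : G) ∈ (Subgroup.normalizer (D : Set G)) := by
    rw [Subgroup.mem_normalizer_iff]
    intro g
    constructor
    · intro hg
      have hgP : g ∈ P := hlt.le hg
      have h1 : (⟨g, hgP⟩ : ↥P) ∈ D' := Subgroup.mem_subgroupOf.mpr hg
      have h2 := (Subgroup.mem_normalizer_iff.mp hxn ⟨g, hgP⟩).mp h1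
      exact Subgroup.mem_subgroupOf.mp h2
    · intro hg
      have hconjP : (x : G) * g * (x : G)⁻¹ ∈ P := hlt.le hg
      have hgP : g ∈ P := by
        have := P.mul_mem (P.mul_mem (P.inv_mem x.2) hconjP) x.2
        simpa [mul_assoc] using this
      have h2 : (x * ⟨g, hgP⟩ * x⁻¹ : ↥P) ∈ D' := by
        apply Subgroup.mem_subgroupOf.mpr
        simpa using hg
      have h1 := (Subgroup.mem_normalizer_iff.mp hxn ⟨g, hgP⟩).mpr h2
      exact Subgroup.mem_subgroupOf.mp h1
  refine lt_of_le_of_ne (le_inf hlt.le Subgroup.le_normalizer) ?_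
  intro heq
  apply hxD
  have hmem : (x : G) ∈ P ⊓ (Subgroup.normalizer (D : Set G)) := ⟨x.2, hxnorm⟩
  rw [← heq] at hmem
  exact Subgroup.mem_subgroupOf.mpr hmem

private lemma aux_sylow_normal_of_card_one {p : ℕ} [Fact p.Prime] [Finite G]
    (P : Sylow p G) (h : Nat.card (Sylow p G) = 1) : (P : Subgroup G).Normal := by
  rw [Sylow.card_eq_index_normalizer P] at h
  rw [← Subgroup.normalizer_eq_top_iff]
  exact Subgroup.index_eq_one.mp h

/-- Counting argument: if all pairs of distinct Sylow `p`-subgroups intersect trivially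
and there are `q` of them, then the Sylow `q`-subgroup is unique. -/
private lemma aux_caseA [Fintype G] {p q n : ℕ} [Fact p.Prime] [Fact q.Prime]
    (hpq : p ≠ q) (hcard : Nat.card G = p ^ n * q)
    (hcardP : ∀ P' : Sylow p G, Nat.card P' = p ^ n)
    (hcardQ : ∀ Q' : Sylow q G, Nat.card Q' = q)
    (hnp : Nat.card (Sylow p G) = q)
    (htriv : ∀ P₁ P₂ : Sylow p G, P₁ ≠ P₂ → (P₁ : Subgroup G) ⊓ P₂ = ⊥) :
    Nat.card (Sylow q G) = 1 := by
  classical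
  have hp := (Fact.out : p.Prime)
  have hq := (Fact.out : q.Prime)
  letI := Fintype.ofFinite (Sylow p G)
  letI := Fintype.ofFinite (Sylow q G)
  have hcop : Nat.Coprime (p ^ n) q := ((Nat.coprime_primes hp hq).mpr hpq).pow_left n
  -- distinct Sylow q-subgroups intersect trivially
  have hqtriv : ∀ Q₁ Q₂ : Sylow q G, Q₁ ≠ Q₂ → (Q₁ : Subgroup G) ⊓ Q₂ = ⊥ := by
    intro Q₁ Q₂ hne
    by_contra hbot
    have hdvd : Nat.card ↥((Q₁ : Subgroup G) ⊓ Q₂) ∣ q :=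
      (Subgroup.card_dvd_of_le inf_le_left).trans (dvd_of_eq (hcardQ Q₁))
    rcases (Nat.Prime.eq_one_or_self_of_dvd hq _ hdvd) with h1 | h1
    · exact hbot ((Subgroup.eq_bot_iff_card _).mpr h1)
    · have heq : (Q₁ : Subgroup G) ⊓ Q₂ = Q₁ :=
        Subgroup.eq_of_le_of_card_ge inf_le_left (by rw [h1, hcardQ])
      have hle : (Q₁ : Subgroup G) ≤ Q₂ := heq ▸ inf_le_right
      exact hne (Sylow.ext (Subgroup.eq_of_le_of_card_ge hle
        (by rw [hcardQ, hcardQ])))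
  -- the nonidentity elements of a subgroup, as a finset
  let nonId : Subgroup G → Finset G := fun H => (Set.toFinset (H : Set G)).erase 1
  have hnonId_card : ∀ H : Subgroup G, (nonId H).card = Nat.card H - 1 := by
    intro H
    have h1 : (Set.toFinset (H : Set G)).card = Nat.card H := by
      rw [Set.toFinset_card, Nat.card_eq_fintype_card]
      exact Fintype.card_congr (Equiv.refl _)
    rw [Finset.card_erase_of_mem (Set.mem_toFinset.mpr H.one_mem), h1]
  have hnonId_mem : ∀ (H : Subgroup G) (g : G), g ∈ nonId H ↔ g ≠ 1 ∧ g ∈ H := by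
    intro H g
    simp [nonId, Set.mem_toFinset]
  set Up : Finset G := Finset.univ.biUnion (fun P' : Sylow p G => nonId ↑P') with hUp
  set Tq : Finset G := Finset.univ.biUnion (fun Q' : Sylow q G => nonId ↑Q') with hTq
  have hdisjP : ∀ (x : Sylow p G), x ∈ Finset.univ → ∀ (y : Sylow p G), y ∈ Finset.univ →
      x ≠ y → Disjoint (nonId ↑x) (nonId ↑y) := by
    intro x _ y _ hxy
    rw [Finset.disjoint_left]
    intro g hgx hgy
    rw [hnonId_mem] at hgx hgy
    have : g ∈ (x : Subgroup G) ⊓ y := ⟨hgx.2, hgy.2⟩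
    rw [htriv x y hxy, Subgroup.mem_bot] at this
    exact hgx.1 this
  have hdisjQ : ∀ (x : Sylow q G), x ∈ Finset.univ → ∀ (y : Sylow q G), y ∈ Finset.univ →
      x ≠ y → Disjoint (nonId ↑x) (nonId ↑y) := by
    intro x _ y _ hxy
    rw [Finset.disjoint_left]
    intro g hgx hgy
    rw [hnonId_mem] at hgx hgy
    have : g ∈ (x : Subgroup G) ⊓ y := ⟨hgx.2, hgy.2⟩
    rw [hqtriv x y hxy, Subgroup.mem_bot] at this
    exact hgx.1 this
  have hUpcard : Up.card = q * (p ^ n - 1) := by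
    rw [hUp, Finset.card_biUnion hdisjP]
    have : ∀ P' : Sylow p G, (nonId ↑P').card = p ^ n - 1 := fun P' => by
      rw [hnonId_card, hcardP]
    rw [Finset.sum_congr rfl (fun P' _ => this P'), Finset.sum_const, Finset.card_univ,
      ← Nat.card_eq_fintype_card, hnp, smul_eq_mul]
  have hTqcard : Tq.card = Fintype.card (Sylow q G) * (q - 1) := by
    rw [hTq, Finset.card_biUnion hdisjQ]
    have : ∀ Q' : Sylow q G, (nonId ↑Q').card = q - 1 := fun Q' => by
      rw [hnonId_card, hcardQ]
    rw [Finset.sum_congr rfl (fun Q' _ => this Q'), Finset.sum_const, Finset.card_univ,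
      smul_eq_mul]
  have hdisjUT : Disjoint Up Tq := by
    rw [Finset.disjoint_left]
    intro g hgU hgT
    rw [hUp, Finset.mem_biUnion] at hgU
    rw [hTq, Finset.mem_biUnion] at hgT
    obtain ⟨P', -, hgP⟩ := hgU
    obtain ⟨Q', -, hgQ⟩ := hgT
    rw [hnonId_mem] at hgP hgQ
    have h1 : orderOf g ∣ p ^ n := (hcardP P') ▸ Subgroup.orderOf_dvd_natCard _ hgP.2
    have h2 : orderOf g ∣ q := (hcardQ Q') ▸ Subgroup.orderOf_dvd_natCard _ hgQ.2
    have h3 : orderOf g ∣ Nat.gcd (p ^ n) q := Nat.dvd_gcd h1 h2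
    rw [Nat.coprime_iff_gcd_eq_one.mp hcop] at h3
    exact hgP.1 (orderOf_eq_one_iff.mp (Nat.dvd_one.mp h3))
  have hsub : Up ∪ Tq ⊆ Finset.univ.erase 1 := by
    intro g hg
    rcases Finset.mem_union.mp hg with h | h
    · rw [hUp, Finset.mem_biUnion] at h
      obtain ⟨P', -, hgP⟩ := h
      rw [hnonId_mem] at hgP
      exact Finset.mem_erase.mpr ⟨hgP.1, Finset.mem_univ _⟩
    · rw [hTq, Finset.mem_biUnion] at h
      obtain ⟨Q', -, hgQ⟩ := h
      rw [hnonId_mem] at hgQ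
      exact Finset.mem_erase.mpr ⟨hgQ.1, Finset.mem_univ _⟩
  have hineq : Up.card + Tq.card ≤ Fintype.card G - 1 := by
    rw [← Finset.card_union_of_disjoint hdisjUT]
    calc (Up ∪ Tq).card ≤ (Finset.univ.erase (1 : G)).card := Finset.card_le_card hsub
      _ = Fintype.card G - 1 := by rw [Finset.card_erase_of_mem (Finset.mem_univ _),
            Finset.card_univ]
  -- arithmetic
  have hcardG : Fintype.card G = p ^ n * q := by rw [← Nat.card_eq_fintype_card, hcard]
  set nq := Fintype.card (Sylow q G) with hnq
  rw [hUpcard, hTqcard, hcardG] at hineq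
  have hapos : 1 ≤ p ^ n := Nat.one_le_pow _ _ hp.pos
  have hsplit : q * p ^ n = q * (p ^ n - 1) + q := by
    conv_lhs => rw [← Nat.sub_add_cancel hapos]
    rw [Nat.mul_add, mul_one]
  have hq2 : 2 ≤ q := hq.two_le
  have hle : nq * (q - 1) ≤ 1 * (q - 1) := by
    rw [one_mul]
    have h1 : p ^ n * q = q * p ^ n := Nat.mul_comm _ _
    rw [h1, hsplit] at hineq
    omega
  have hnq1 : nq ≤ 1 := Nat.le_of_mul_le_mul_right hle (by omega)
  have hnqpos : 0 < nq := Fintype.card_pos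
  rw [Nat.card_eq_fintype_card, ← hnq]
  omega

end Aux

/-- A finite group of order `pⁿq` (`p`, `q` primes, not necessarily distinct, `n ≥ 1`)
is not simple: it contains a normal subgroup other than the trivial subgroup and the
whole group. -/
theorem exists_proper_normal_subgroup_of_card_pow_prime_mul_prime (G : Type*)
    [Group G] [Finite G] (p q n : ℕ) (hp : p.Prime) (hq : q.Prime) (hn : 1 ≤ n)
    (hcard : Nat.card G = p ^ n * q) :
    ∃ H : Subgroup G, H.Normal ∧ H ≠ ⊥ ∧ H ≠ ⊤ := by
  classical
  haveI : Fact p.Prime := ⟨hp⟩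
  haveI : Fact q.Prime := ⟨hq⟩
  letI := Fintype.ofFinite G
  by_cases hpq : p = q
  · -- p = q : G is a p-group of order p^(n+1)
    subst hpq
    have hcard' : Nat.card G = p ^ (n + 1) := by rw [hcard, pow_succ]
    haveI : Nontrivial G := by
      rw [← Finite.one_lt_card_iff_nontrivial, hcard']
      exact Nat.one_lt_pow (Nat.succ_ne_zero n) hp.one_lt
    have hG : IsPGroup p G := IsPGroup.of_card hcard'
    by_cases hcent : Subgroup.center G = ⊤
    · obtain ⟨x, hx⟩ := exists_prime_orderOf_dvd_card (G := G) p
        (by rw [← Nat.card_eq_fintype_card, hcard']; exact dvd_pow_self p (Nat.succ_ne_zero n))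
      refine ⟨Subgroup.zpowers x, ?_, ?_, ?_⟩
      · constructor
        intro a ha g
        have hac : a ∈ Subgroup.center G := hcent ▸ Subgroup.mem_top a
        have h : g * a * g⁻¹ = a := by
          rw [Subgroup.mem_center_iff.mp hac g, mul_assoc]
          simp
        rw [h]; exact ha
      · intro hbot
        have h1 : x ∈ (⊥ : Subgroup G) := hbot ▸ Subgroup.mem_zpowers x
        rw [Subgroup.mem_bot] at h1
        rw [h1, orderOf_one] at hx
        exact hp.ne_one hx.symm
      · intro htop
        have h1 : Nat.card (Subgroup.zpowers x) = p := by rw [Nat.card_zpowers, hx]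
        rw [htop, Subgroup.card_top, hcard'] at h1
        have h2 : p < p ^ (n + 1) := by
          calc p = p ^ 1 := (pow_one p).symm
            _ < p ^ (n + 1) := Nat.pow_lt_pow_right hp.one_lt (by omega)
        omega
    · refine ⟨Subgroup.center G, inferInstance, ?_, hcent⟩
      haveI := hG.center_nontrivial
      exact (Subgroup.one_lt_card_iff_ne_bot _).mp Finite.one_lt_card
  · -- p ≠ q
    have hcop : Nat.Coprime (p ^ n) q := ((Nat.coprime_primes hp hq).mpr hpq).pow_left n
    have hppow_pos : 1 ≤ p ^ n := Nat.one_le_pow _ _ hp.pos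
    have hfacp : (Nat.card G).factorization p = n := by
      rw [hcard, Nat.factorization_mul (pow_ne_zero n hp.pos.ne') hq.pos.ne',
        hp.factorization_pow, hq.factorization]
      simp [Finsupp.single_apply, hpq, Ne.symm hpq]
    have hfacq : (Nat.card G).factorization q = 1 := by
      rw [hcard, Nat.factorization_mul (pow_ne_zero n hp.pos.ne') hq.pos.ne',
        hp.factorization_pow, hq.factorization]
      simp [Finsupp.single_apply, hpq, Ne.symm hpq]
    have hcardP : ∀ P' : Sylow p G, Nat.card P' = p ^ n := fun P' => by
      rw [P'.card_eq_multiplicity, hfacp]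
    have hcardQ : ∀ Q' : Sylow q G, Nat.card Q' = q := fun Q' => by
      rw [Q'.card_eq_multiplicity, hfacq, pow_one]
    have hPbot : ∀ P' : Sylow p G, (P' : Subgroup G) ≠ ⊥ := by
      intro P' hb
      have h1 := hcardP P'
      rw [hb, Subgroup.card_bot] at h1
      have := Nat.one_lt_pow (by omega : n ≠ 0) hp.one_lt
      omega
    have hPtop : ∀ P' : Sylow p G, (P' : Subgroup G) ≠ ⊤ := by
      intro P' ht
      have h1 := hcardP P'
      rw [ht, Subgroup.card_top, hcard] at h1
      have h2 := hq.two_le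
      nlinarith
    obtain ⟨P⟩ : Nonempty (Sylow p G) := inferInstance
    by_cases hnormP : (P : Subgroup G).Normal
    · exact ⟨P, hnormP, hPbot P, hPtop P⟩
    obtain ⟨Q0⟩ : Nonempty (Sylow q G) := inferInstance
    have hQbot : (Q0 : Subgroup G) ≠ ⊥ := by
      intro hb
      have h1 := hcardQ Q0
      rw [hb, Subgroup.card_bot] at h1
      exact hq.one_lt.ne h1
    have hQtop : (Q0 : Subgroup G) ≠ ⊤ := by
      intro ht
      have h1 := hcardQ Q0
      rw [ht, Subgroup.card_top, hcard] at h1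
      have h2 := hp.two_le
      have h3 : 2 ≤ p ^ n := le_trans h2 (Nat.le_self_pow (by omega) p)
      nlinarith [hq.two_le]
    by_cases hnormQ : (Q0 : Subgroup G).Normal
    · exact ⟨Q0, hnormQ, hQbot, hQtop⟩
    -- there are exactly `q` Sylow `p`-subgroups
    have hindex : (P : Subgroup G).index = q := by
      have h1 := Subgroup.card_mul_index (P : Subgroup G)
      rw [hcardP P, hcard] at h1
      exact Nat.eq_of_mul_eq_mul_left (by omega) h1
    have hnp : Nat.card (Sylow p G) = q := by
      have h1 : Nat.card (Sylow p G) ∣ q := hindex ▸ Sylow.card_dvd_index P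
      rcases hq.eq_one_or_self_of_dvd _ h1 with h | h
      · exact absurd (aux_sylow_normal_of_card_one P h) hnormP
      · exact h
    -- pick a pair of distinct Sylow p-subgroups with maximal intersection
    letI := Fintype.ofFinite (Sylow p G)
    have hnontriv : Nontrivial (Sylow p G) := by
      rw [← Finite.one_lt_card_iff_nontrivial, hnp]
      exact hq.one_lt
    obtain ⟨A, B, hAB⟩ := hnontriv.exists_pair_ne
    set s : Finset (Sylow p G × Sylow p G) := Finset.univ.filter (fun t => t.1 ≠ t.2) with hs_def
    have hs : s.Nonempty := ⟨(A, B), by simp [hs_def, hAB]⟩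
    obtain ⟨t, hts, hmax'⟩ :=
      Finset.exists_max_image s (fun t => Nat.card ↥((t.1 : Subgroup G) ⊓ t.2)) hs
    obtain ⟨P₁, P₂⟩ := t
    have hne : P₁ ≠ P₂ := by simpa [hs_def] using hts
    have hmax : ∀ R₁ R₂ : Sylow p G, R₁ ≠ R₂ →
        Nat.card ↥((R₁ : Subgroup G) ⊓ R₂) ≤ Nat.card ↥((P₁ : Subgroup G) ⊓ P₂) := by
      intro R₁ R₂ h
      exact hmax' (R₁, R₂) (by simp [hs_def, h])
    by_cases hD : (P₁ : Subgroup G) ⊓ P₂ = ⊥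
    · -- all intersections trivial: counting forces a unique (hence normal) Sylow q-subgroup
      have htriv : ∀ R₁ R₂ : Sylow p G, R₁ ≠ R₂ → (R₁ : Subgroup G) ⊓ R₂ = ⊥ := by
        intro R₁ R₂ h
        have h1 := hmax R₁ R₂ h
        rw [hD, Subgroup.card_bot] at h1
        have h2 : 0 < Nat.card ↥((R₁ : Subgroup G) ⊓ R₂) := Nat.card_pos
        exact (Subgroup.eq_bot_iff_card _).mpr (by omega)
      have hone := aux_caseA hpq hcard hcardP hcardQ hnp htriv
      exact ⟨Q0, aux_sylow_normal_of_card_one Q0 hone, hQbot, hQtop⟩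
    · -- maximal intersection is nontrivial
      set D : Subgroup G := (P₁ : Subgroup G) ⊓ P₂ with hDdef
      have hDlt₁ : D < (P₁ : Subgroup G) := by
        refine lt_of_le_of_ne inf_le_left ?_
        intro h
        have hle : (P₁ : Subgroup G) ≤ P₂ := h ▸ inf_le_right
        exact hne (Sylow.ext (Subgroup.eq_of_le_of_card_ge hle (by rw [hcardP, hcardP])))
      have hDlt₂ : D < (P₂ : Subgroup G) := by
        refine lt_of_le_of_ne inf_le_right ?_
        intro h
        have hle : (P₂ : Subgroup G) ≤ P₁ := h ▸ inf_le_left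
        exact hne (Sylow.ext (Subgroup.eq_of_le_of_card_ge hle (by rw [hcardP, hcardP])).symm)
      -- q divides the order of the normalizer of D
      have hqN : q ∣ Nat.card (Subgroup.normalizer (D : Set G)) := by
        by_contra hndvd
        have hdvd : Nat.card (Subgroup.normalizer (D : Set G)) ∣ p ^ n * q :=
          hcard ▸ Subgroup.card_subgroup_dvd_card _
        have hco : Nat.Coprime (Nat.card (Subgroup.normalizer (D : Set G))) q :=
          ((Nat.Prime.coprime_iff_not_dvd hq).mpr hndvd).symm
        have hdp : Nat.card (Subgroup.normalizer (D : Set G)) ∣ p ^ n := hco.dvd_of_dvd_mul_right hdvd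
        obtain ⟨m, -, hcardN⟩ := (Nat.dvd_prime_pow hp).mp hdp
        have hNp : IsPGroup p (Subgroup.normalizer (D : Set G)) := IsPGroup.of_card hcardN
        obtain ⟨T, hT⟩ := hNp.exists_le_sylow
        have key : ∀ R : Sylow p G, D < (R : Subgroup G) → T = R := by
          intro R hDR
          have hE : D < (R : Subgroup G) ⊓ (Subgroup.normalizer (D : Set G)) :=
            aux_lt_inf_normalizer R.isPGroup' hDR
          by_contra hTR
          have h1 : Nat.card ↥((R : Subgroup G) ⊓ T) ≤ Nat.card D :=
            hmax R T (fun h => hTR h.symm)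
          have h2 : Nat.card ↥((R : Subgroup G) ⊓ (Subgroup.normalizer (D : Set G))) ≤
              Nat.card ↥((R : Subgroup G) ⊓ T) :=
            Subgroup.card_le_of_le (le_inf inf_le_left (le_trans inf_le_right hT))
          have h3 : Nat.card D < Nat.card ↥((R : Subgroup G) ⊓ (Subgroup.normalizer (D : Set G))) :=
            aux_card_lt_of_lt hE
          omega
        exact hne ((key P₁ hDlt₁).symm.trans (key P₂ hDlt₂))
      -- get a subgroup of order q inside the normalizer of D
      letI := Fintype.ofFinite ↥(Subgroup.normalizer (D : Set G))
      obtain ⟨y, hy⟩ := exists_prime_orderOf_dvd_card (G := ↥(Subgroup.normalizer (D : Set G))) q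
        (by rwa [← Nat.card_eq_fintype_card])
      have hyG : orderOf (y : G) = q := by rw [Subgroup.orderOf_coe, hy]
      set Qs : Subgroup G := Subgroup.zpowers (y : G) with hQs
      have hQcard : Nat.card Qs = q := by rw [hQs, Nat.card_zpowers, hyG]
      have hQN : Qs ≤ (Subgroup.normalizer (D : Set G)) := Subgroup.zpowers_le.mpr y.2
      have hcomp : Subgroup.IsComplement' (P₁ : Subgroup G) Qs :=
        Subgroup.isComplement'_of_coprime (by rw [hcardP P₁, hQcard, hcard])
          (by rw [hcardP P₁, hQcard]; exact hcop)
      -- the normal closure of D is a proper nontrivial normal subgroup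
      have hKle : Subgroup.normalClosure (D : Set G) ≤ P₁ := by
        rw [Subgroup.normalClosure]
        refine (Subgroup.closure_le _).mpr ?_
        rintro x hx
        rw [Group.mem_conjugatesOfSet_iff] at hx
        obtain ⟨a, haD, hconj⟩ := hx
        obtain ⟨c, hc⟩ := isConj_iff.mp hconj
        obtain ⟨⟨⟨h, hh⟩, ⟨k, hk⟩⟩, hhk, -⟩ := hcomp.existsUnique c
        simp only at hhk
        have hkD : k * a * k⁻¹ ∈ D :=
          (Subgroup.mem_normalizer_iff.mp (hQN hk) a).mp haD
        have hxP : x = h * (k * a * k⁻¹) * h⁻¹ := by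
          rw [← hc, ← hhk]
          group
        rw [hxP]
        exact Subgroup.mul_mem _ (Subgroup.mul_mem _ hh (hDlt₁.le hkD)) (Subgroup.inv_mem _ hh)
      refine ⟨Subgroup.normalClosure (D : Set G), Subgroup.normalClosure_normal, ?_, ?_⟩
      · intro hb
        have h1 : D ≤ Subgroup.normalClosure (D : Set G) := Subgroup.le_normalClosure
        rw [hb, le_bot_iff] at h1
        exact hD h1
      · intro ht
        rw [ht] at hKle
        exact hPtop P₁ (top_le_iff.mp hKle)
end

section
/- Let G be a finite group, p a prime dividing |G|, and P a Sylow p-subgroup of G with P ⊆ Z(G). Then there exists a (normal) subgroup K of G such that G is isomorphic to the direct product P × K. -/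
/-- If a Sylow `p`-subgroup `P` of a finite group `G` is contained in the center of
`G`, then `G` is isomorphic to the direct product of `P` with a normal subgroup `K`. -/
theorem sylow_central_direct_factor (G : Type*) [Group G] [Finite G]
    (p : ℕ) (hp : p.Prime) (hdvd : p ∣ Nat.card G) (P : Sylow p G)
    (hP : (P : Subgroup G) ≤ Subgroup.center G) :
    ∃ K : Subgroup G, K.Normal ∧ Nonempty (G ≃* (↥(P : Subgroup G)) × (↥K)) := by
  haveI : Fact p.Prime := ⟨hp⟩
  haveI hnorm : (P : Subgroup G).Normal := by
    constructor
    intro n hn g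
    have := Subgroup.mem_center_iff.mp (hP hn) g
    rw [this, mul_assoc, mul_inv_cancel, mul_one]
    exact hn
  obtain ⟨K, hK⟩ := Subgroup.exists_right_complement'_of_coprime P.card_coprime_index
  -- The multiplication map P × K → G is bijective
  have hbij : Function.Bijective (fun x : (↥(P : Subgroup G)) × (↥K) => (x.1 : G) * x.2) := hK
  -- Elements of P commute with everything
  have hcomm : ∀ (x : (P : Subgroup G)) (g : G), (x : G) * g = g * x := fun x g =>
    (Subgroup.mem_center_iff.mp (hP x.2) g).symm
  -- build the MulEquiv from P × K to G
  let e : ((↥(P : Subgroup G)) × (↥K)) ≃* G :=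
    { Equiv.ofBijective _ hbij with
      map_mul' := by
        rintro ⟨x₁, k₁⟩ ⟨x₂, k₂⟩
        show ((x₁ * x₂ : (P : Subgroup G)) : G) * ((k₁ * k₂ : K) : G)
            = ((x₁ : G) * k₁) * ((x₂ : G) * k₂)
        push_cast
        rw [mul_assoc, show ((x₂ : G) * ((k₁ : G) * k₂)) = (k₁ : G) * ((x₂ : G) * k₂) by
          rw [hcomm x₂ ((k₁ : G) * k₂), ← mul_assoc, mul_assoc (k₁ : G), ← hcomm x₂ k₂, ← mul_assoc], ← mul_assoc] }
  refine ⟨K, ?_, ⟨e.symm⟩⟩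
  -- K is normal
  constructor
  intro n hn g
  obtain ⟨⟨x, k⟩, rfl⟩ := hbij.surjective g
  have h1 : (x : G) * k * n * ((x : G) * k)⁻¹
      = (x : G) * ((k : G) * n * (k : G)⁻¹) * (x : G)⁻¹ := by group
  have h2 : (x : G) * ((k : G) * n * (k : G)⁻¹) * (x : G)⁻¹
      = (k : G) * n * (k : G)⁻¹ := by
    rw [hcomm x ((k : G) * n * (k : G)⁻¹), mul_assoc, mul_inv_cancel, mul_one]
  rw [h1, h2]
  exact mul_mem (mul_mem k.2 hn) (inv_mem k.2)
end

section
/- (Sanov) Let n ≥ 2 be an integer, and let x = [[1, n], [0, 1]] and y = [[1, 0], [n, 1]] in SL₂(ℤ). Then {x, y} is a free generating set of the subgroup of SL₂(ℤ) it generates: no nonempty reduced word in x and y equals the identity, i.e. the canonical homomorphism from the free group on two generators to SL₂(ℤ) sending the generators to x and y is injective. -/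
open Pointwise

private lemma sanovH1 (a b : ℤ) (h : b*b < a*b) : b*b < a*a := by
  have hb : b ≠ 0 := by rintro rfl; simp at h
  have hb2 : 0 < b*b := mul_self_pos.mpr hb
  have h2 : (b*b)*(b*b) < (a*a)*(b*b) := by nlinarith
  exact lt_of_mul_lt_mul_right h2 (mul_self_nonneg b)

private lemma sanovH1' (a b : ℤ) (h : b*b < -(a*b)) : b*b < a*a := by
  have := sanovH1 (-a) b (by rw [neg_mul]; exact h)
  simpa using this

private lemma sanovH2 (a b : ℤ) (h : b*b ≤ a*b) : b*b ≤ a*a := by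
  by_cases hb : b = 0
  · subst hb; simpa using mul_self_nonneg a
  · have hb2 : 0 < b*b := mul_self_pos.mpr hb
    have h2 : (b*b)*(b*b) ≤ (a*a)*(b*b) := by nlinarith
    exact le_of_mul_le_mul_right h2 hb2

private lemma sanovH2' (a b : ℤ) (h : b*b ≤ -(a*b)) : b*b ≤ a*a := by
  have := sanovH2 (-a) b (by rw [neg_mul]; exact h)
  simpa using this

private lemma sanovL1 (n p q : ℤ) (hn : 2 ≤ n) (h0 : p ≠ 0 ∨ q ≠ 0)
    (h : ¬(q*q ≤ p*p ∧ p*q < 0 ∧ p ≠ -q)) :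
    (q*q < (p+n*q)*(p+n*q) ∧ 0 ≤ (p+n*q)*q) ∨ (p+n*q = q ∧ q ≠ 0) := by
  by_cases hq : q = 0
  · subst hq
    have hp : p ≠ 0 := by tauto
    left
    constructor
    · simpa using mul_self_pos.mpr hp
    · simp
  · have hq2 : 1 ≤ q*q := mul_self_pos.mpr hq
    by_cases hpq : 0 ≤ p*q
    · left
      have h1 : q*q < (p+n*q)*q := by nlinarith
      exact ⟨sanovH1 _ _ h1, by nlinarith⟩
    · push_neg at hpq
      by_cases hpp : q*q ≤ p*p
      · have hpe : p = -q := by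
          by_contra hne
          exact h ⟨hpp, hpq, hne⟩
        subst hpe
        by_cases hn2 : n = 2
        · right
          subst hn2
          constructor
          · ring
          · exact hq
        · left
          have hn3 : 3 ≤ n := by omega
          constructor
          · have e : (-q + n*q)*(-q + n*q) = ((n-1)*(n-1))*(q*q) := by ring
            rw [e]
            have h4 : 4 ≤ (n-1)*(n-1) := by nlinarith
            nlinarith
          · nlinarith
      · push_neg at hpp
        left
        have key : q*q < (p+n*q)*q := by nlinarith [sq_nonneg (p+q)]
        exact ⟨sanovH1 _ _ key, by nlinarith⟩

private lemma sanovL2 (n p q : ℤ) (hn : 2 ≤ n) (h0 : p ≠ 0 ∨ q ≠ 0)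
    (h : ¬((q*q < p*p ∧ 0 ≤ p*q) ∨ (p = q ∧ q ≠ 0))) :
    q*q ≤ (p-n*q)*(p-n*q) ∧ (p-n*q)*q < 0 ∧ p-n*q ≠ -q := by
  push_neg at h
  obtain ⟨h1, h2⟩ := h
  by_cases hq : q = 0
  · exfalso
    subst hq
    have hp : p ≠ 0 := by tauto
    have := h1 (by simpa using mul_self_pos.mpr hp)
    simp at this
  · have hq2 : 1 ≤ q*q := mul_self_pos.mpr hq
    by_cases hpq : p*q < 0
    · have key : q*q < -((p-n*q)*q) := by nlinarith
      refine ⟨le_of_lt (sanovH1' _ _ key), by nlinarith, ?_⟩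
      intro He
      rw [He] at key
      nlinarith
    · push_neg at hpq
      have hpp : p*p ≤ q*q := by
        by_contra hc
        push_neg at hc
        exact absurd (h1 hc) (not_lt.mpr hpq)
      have hpqle : p*q ≤ q*q := by nlinarith [sq_nonneg (p - q)]
      have key : q*q ≤ -((p-n*q)*q) := by nlinarith
      refine ⟨sanovH2' _ _ key, by nlinarith, ?_⟩
      intro He
      have hp : p = (n-1)*q := by linarith [He]
      have hn2 : n = 2 := by
        by_contra hc
        have hn3 : 3 ≤ n := by omega
        have e : p*p = ((n-1)*(n-1))*(q*q) := by rw [hp]; ring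
        have h4 : 4 ≤ (n-1)*(n-1) := by nlinarith
        nlinarith
      apply hq
      apply h2
      rw [hp, hn2]; ring

private lemma sanovL3 (n p q : ℤ) (hn : 2 ≤ n) (h0 : p ≠ 0 ∨ q ≠ 0)
    (h : ¬(p*p ≤ q*q ∧ p*q < 0)) :
    p*p < (n*p+q)*(n*p+q) ∧ 0 ≤ p*(n*p+q) := by
  by_cases hp : p = 0
  · subst hp
    have hq : q ≠ 0 := by tauto
    constructor
    · simpa using mul_self_pos.mpr hq
    · simp
  · have hp2 : 1 ≤ p*p := mul_self_pos.mpr hp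
    by_cases hpq : 0 ≤ p*q
    · have h1 : p*p < p*(n*p+q) := by nlinarith
      have h1' : p*p < (n*p+q)*p := by linarith [mul_comm p (n*p+q)]
      exact ⟨sanovH1 _ _ h1', by linarith⟩
    · push_neg at hpq
      have hqq : q*q < p*p := by
        by_contra hc
        push_neg at hc
        exact h ⟨by linarith, hpq⟩
      have key : p*p < p*(n*p+q) := by nlinarith [sq_nonneg (p+q)]
      have key' : p*p < (n*p+q)*p := by linarith [mul_comm p (n*p+q)]
      exact ⟨sanovH1 _ _ key', by linarith⟩

private lemma sanovL4 (n p q : ℤ) (hn : 2 ≤ n) (h0 : p ≠ 0 ∨ q ≠ 0)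
    (h : ¬(p*p < q*q ∧ 0 ≤ p*q)) :
    p*p ≤ (q-n*p)*(q-n*p) ∧ p*(q-n*p) < 0 := by
  by_cases hp : p = 0
  · exfalso
    subst hp
    have hq : q ≠ 0 := by tauto
    exact h ⟨by simpa using mul_self_pos.mpr hq, by simp⟩
  · have hp2 : 1 ≤ p*p := mul_self_pos.mpr hp
    by_cases hpq : p*q < 0
    · have key : p*p ≤ -((q-n*p)*p) := by nlinarith
      refine ⟨sanovH2' _ _ key, ?_⟩
      have := mul_comm (q-n*p) p
      nlinarith
    · push_neg at hpq
      have hqq : q*q ≤ p*p := by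
        by_contra hc
        push_neg at hc
        exact h ⟨hc, hpq⟩
      have hpqle : p*q ≤ p*p := by nlinarith [sq_nonneg (p - q)]
      have key : p*p ≤ -((q-n*p)*p) := by nlinarith
      refine ⟨sanovH2' _ _ key, ?_⟩
      have := mul_comm (q-n*p) p
      nlinarith

private def SanovV : Type := {v : Fin 2 → ℤ // v ≠ 0}

namespace SanovV

instance : SMul (Matrix.SpecialLinearGroup (Fin 2) ℤ) SanovV where
  smul g v := ⟨(g : Matrix (Fin 2) (Fin 2) ℤ).mulVec v.1, by
    intro hzero
    apply v.2
    have h1 : ((g⁻¹ : Matrix.SpecialLinearGroup (Fin 2) ℤ) : Matrix (Fin 2) (Fin 2) ℤ).mulVec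
        ((g : Matrix (Fin 2) (Fin 2) ℤ).mulVec v.1) = v.1 := by
      rw [Matrix.mulVec_mulVec, ← Matrix.SpecialLinearGroup.coe_mul, inv_mul_cancel,
        Matrix.SpecialLinearGroup.coe_one, Matrix.one_mulVec]
    rw [hzero, Matrix.mulVec_zero] at h1
    exact h1.symm⟩

lemma smul_coe (g : Matrix.SpecialLinearGroup (Fin 2) ℤ) (v : SanovV) :
    (g • v).1 = (g : Matrix (Fin 2) (Fin 2) ℤ).mulVec v.1 := rfl

instance : MulAction (Matrix.SpecialLinearGroup (Fin 2) ℤ) SanovV where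
  one_smul v := Subtype.ext (by
    rw [smul_coe, Matrix.SpecialLinearGroup.coe_one, Matrix.one_mulVec])
  mul_smul g h v := Subtype.ext (by
    rw [smul_coe, smul_coe, smul_coe, Matrix.SpecialLinearGroup.coe_mul,
      Matrix.mulVec_mulVec])

end SanovV

/-- (Sanov) For an integer `n ≥ 2`, the matrices `[[1, n], [0, 1]]` and
`[[1, 0], [n, 1]]` freely generate a free subgroup of `SL₂(ℤ)`: the canonical
homomorphism from the free group on two generators sending them to these matrices is
injective. -/
theorem sanov_free_subgroup (n : ℤ) (hn : 2 ≤ n)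
    (x y : Matrix.SpecialLinearGroup (Fin 2) ℤ)
    (hx : (x : Matrix (Fin 2) (Fin 2) ℤ) = !![1, n; 0, 1])
    (hy : (y : Matrix (Fin 2) (Fin 2) ℤ) = !![1, 0; n, 1]) :
    Function.Injective ⇑(FreeGroup.lift (fun b : Bool => if b then x else y)) := by
  have hxinv : ((x⁻¹ : Matrix.SpecialLinearGroup (Fin 2) ℤ) : Matrix (Fin 2) (Fin 2) ℤ)
      = !![1, -n; 0, 1] := by
    rw [Matrix.SpecialLinearGroup.coe_inv, hx, Matrix.adjugate_fin_two]
    norm_num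
  have hyinv : ((y⁻¹ : Matrix.SpecialLinearGroup (Fin 2) ℤ) : Matrix (Fin 2) (Fin 2) ℤ)
      = !![1, 0; -n, 1] := by
    rw [Matrix.SpecialLinearGroup.coe_inv, hy, Matrix.adjugate_fin_two]
    norm_num
  classical
  let X : Bool → Set SanovV := fun b => match b with
    | true => {v | (v.1 1 * v.1 1 < v.1 0 * v.1 0 ∧ 0 ≤ v.1 0 * v.1 1)
        ∨ (v.1 0 = v.1 1 ∧ v.1 1 ≠ 0)}
    | false => {v | v.1 0 * v.1 0 < v.1 1 * v.1 1 ∧ 0 ≤ v.1 0 * v.1 1}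
  let Y : Bool → Set SanovV := fun b => match b with
    | true => {v | v.1 1 * v.1 1 ≤ v.1 0 * v.1 0 ∧ v.1 0 * v.1 1 < 0 ∧ v.1 0 ≠ -(v.1 1)}
    | false => {v | v.1 0 * v.1 0 ≤ v.1 1 * v.1 1 ∧ v.1 0 * v.1 1 < 0}
  have hone : (![1, 0] : Fin 2 → ℤ) ≠ 0 := by
    intro h
    simpa using congrFun h 0
  have htwo : (![0, 1] : Fin 2 → ℤ) ≠ 0 := by
    intro h
    simpa using congrFun h 1
  have h0 : ∀ v : SanovV, v.1 0 ≠ 0 ∨ v.1 1 ≠ 0 := by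
    intro v
    by_contra hc
    push_neg at hc
    apply v.2
    funext i
    fin_cases i
    · exact hc.1
    · exact hc.2
  apply FreeGroup.injective_lift_of_ping_pong _ X Y
  · -- nonempty
    intro i
    cases i
    · exact ⟨⟨![0, 1], htwo⟩, by show _ ∧ _; exact ⟨by norm_num, by norm_num⟩⟩
    · exact ⟨⟨![1, 0], hone⟩, by show _ ∨ _; exact Or.inl ⟨by norm_num, by norm_num⟩⟩
  · -- X pairwise disjoint
    intro i j hij
    have : ∀ v : SanovV, v ∈ X true → v ∈ X false → False := by
      rintro v (⟨h1, h2⟩ | ⟨h1, h2⟩) ⟨h3, h4⟩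
      · linarith
      · rw [h1] at h3
        exact lt_irrefl _ h3
    cases i <;> cases j <;> simp at hij <;>
      [exact Set.disjoint_left.mpr fun v hv hv' => this v hv' hv;
       exact Set.disjoint_left.mpr fun v hv hv' => this v hv hv']
  · -- Y pairwise disjoint
    intro i j hij
    have : ∀ v : SanovV, v ∈ Y true → v ∈ Y false → False := by
      rintro v ⟨h1, h2, h3⟩ ⟨h4, h5⟩
      have he : v.1 0 * v.1 0 = v.1 1 * v.1 1 := le_antisymm h4 h1
      rcases mul_self_eq_mul_self_iff.mp he with h | h
      · nlinarith
      · exact h3 h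
    cases i <;> cases j <;> simp at hij <;>
      [exact Set.disjoint_left.mpr fun v hv hv' => this v hv' hv;
       exact Set.disjoint_left.mpr fun v hv hv' => this v hv hv']
  · -- X-Y disjoint
    intro i j
    apply Set.disjoint_left.mpr
    intro v hvX hvY
    cases i <;> cases j
    · obtain ⟨h1, h2⟩ := hvX
      obtain ⟨h3, h4⟩ := hvY
      linarith
    · obtain ⟨h1, h2⟩ := hvX
      obtain ⟨h3, h4, h5⟩ := hvY
      linarith
    · rcases hvX with ⟨h1, h2⟩ | ⟨h1, h2⟩
      · obtain ⟨h3, h4⟩ := hvY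
        linarith
      · obtain ⟨h3, h4⟩ := hvY
        nlinarith
    · rcases hvX with ⟨h1, h2⟩ | ⟨h1, h2⟩
      · obtain ⟨h3, h4, h5⟩ := hvY
        linarith
      · obtain ⟨h3, h4, h5⟩ := hvY
        nlinarith
  · -- ping: a i • (Y i)ᶜ ⊆ X i
    intro i
    cases i
    · -- false: y
      have ha : (if (false : Bool) = true then x else y) = y := by simp
      rw [ha]
      intro w hw
      rw [Set.mem_smul_set] at hw
      obtain ⟨v, hv, rfl⟩ := hw
      have e : (y • v).1 = ![v.1 0, n * v.1 0 + v.1 1] := by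
        rw [SanovV.smul_coe, hy]
        funext k
        fin_cases k <;>
          simp [Matrix.mulVec, dotProduct, Fin.sum_univ_two, mul_comm]
      have hL := sanovL3 n (v.1 0) (v.1 1) hn (h0 v) (by simpa [Y] using hv)
      show _ ∈ X false
      simp only [X, Set.mem_setOf_eq, e, Matrix.cons_val_zero, Matrix.cons_val_one,
        Matrix.head_cons]
      exact hL
    · -- true: x
      have ha : (if (true : Bool) = true then x else y) = x := by simp
      rw [ha]
      intro w hw
      rw [Set.mem_smul_set] at hw
      obtain ⟨v, hv, rfl⟩ := hw
      have e : (x • v).1 = ![v.1 0 + n * v.1 1, v.1 1] := by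
        rw [SanovV.smul_coe, hx]
        funext k
        fin_cases k <;>
          simp [Matrix.mulVec, dotProduct, Fin.sum_univ_two, mul_comm]
      have hL := sanovL1 n (v.1 0) (v.1 1) hn (h0 v) (by simpa [Y] using hv)
      show _ ∈ X true
      simp only [X, Set.mem_setOf_eq, e, Matrix.cons_val_zero, Matrix.cons_val_one,
        Matrix.head_cons]
      exact hL
  · -- pong: (a i)⁻¹ • (X i)ᶜ ⊆ Y i
    intro i
    cases i
    · -- false: y⁻¹
      have ha : ((fun b : Bool => if b then x else y)⁻¹) false = y⁻¹ := by
        simp [Pi.inv_apply]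
      rw [ha]
      intro w hw
      rw [Set.mem_smul_set] at hw
      obtain ⟨v, hv, rfl⟩ := hw
      have e : (y⁻¹ • v).1 = ![v.1 0, v.1 1 - n * v.1 0] := by
        rw [SanovV.smul_coe, hyinv]
        funext k
        fin_cases k <;>
          simp [Matrix.mulVec, dotProduct, Fin.sum_univ_two] <;> ring
      have hL := sanovL4 n (v.1 0) (v.1 1) hn (h0 v) (by simpa [X] using hv)
      show _ ∈ Y false
      simp only [Y, Set.mem_setOf_eq, e, Matrix.cons_val_zero, Matrix.cons_val_one,
        Matrix.head_cons]
      exact hL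
    · -- true: x⁻¹
      have ha : ((fun b : Bool => if b then x else y)⁻¹) true = x⁻¹ := by
        simp [Pi.inv_apply]
      rw [ha]
      intro w hw
      rw [Set.mem_smul_set] at hw
      obtain ⟨v, hv, rfl⟩ := hw
      have e : (x⁻¹ • v).1 = ![v.1 0 - n * v.1 1, v.1 1] := by
        rw [SanovV.smul_coe, hxinv]
        funext k
        fin_cases k <;>
          simp [Matrix.mulVec, dotProduct, Fin.sum_univ_two] <;> ring
      have hL := sanovL2 n (v.1 0) (v.1 1) hn (h0 v) (by simpa [X] using hv)
      show _ ∈ Y true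
      simp only [Y, Set.mem_setOf_eq, e, Matrix.cons_val_zero, Matrix.cons_val_one,
        Matrix.head_cons]
      exact hL
end

section
/- Every free group is residually finite: for every non-identity element w of a free group G there exists a subgroup of finite index in G not containing w; equivalently, the intersection of all finite-index subgroups of G is the trivial subgroup. -/
open List

section PermExtend

/-- Any injective partial function on a finite type whose domain maps onto a prescribed
"range" predicate extends to a permutation. -/
lemma exists_perm_extend {m : ℕ} (P Q : Fin m → Prop) [DecidablePred P] [DecidablePred Q]
    (f : ∀ i, P i → Fin m) (hQ : ∀ i h, Q (f i h))
    (hinj : ∀ i hi j hj, f i hi = f j hj → i = j)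
    (hsurj : ∀ j, Q j → ∃ i hi, f i hi = j) :
    ∃ σ : Equiv.Perm (Fin m), ∀ i hi, σ i = f i hi := by
  let e : {i // P i} ≃ {j // Q j} := Equiv.ofBijective (fun i => ⟨f i.1 i.2, hQ _ _⟩)
    ⟨fun i j hij => Subtype.ext (hinj _ _ _ _ (Subtype.ext_iff.mp hij)), fun j => by
      obtain ⟨i, hi, h⟩ := hsurj j.1 j.2; exact ⟨⟨i, hi⟩, Subtype.ext h⟩⟩
  have hcard : Fintype.card {i // ¬ P i} = Fintype.card {j // ¬ Q j} := by
    rw [Fintype.card_subtype_compl, Fintype.card_subtype_compl, Fintype.card_congr e]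
  let c := Fintype.equivOfCardEq hcard
  refine ⟨(Equiv.sumCompl P).symm.trans ((e.sumCongr c).trans (Equiv.sumCompl Q)), ?_⟩
  intro i hi
  rw [Equiv.trans_apply, Equiv.trans_apply, Equiv.sumCompl_symm_apply_of_pos hi,
    Equiv.sumCongr_apply, Sum.map_inl, Equiv.sumCompl_apply_inl]
  rfl

end PermExtend

namespace FGRF

variable {α : Type*} (L : List (α × Bool))

/-- `i ↦ i - 1` is demanded. -/
def down (a : α) (i : Fin (L.length + 1)) : Prop :=
  ∃ h : i.1 - 1 < L.length, 0 < i.1 ∧ L.get ⟨i.1 - 1, h⟩ = (a, true)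

/-- `i ↦ i + 1` is demanded. -/
def up (a : α) (i : Fin (L.length + 1)) : Prop :=
  ∃ h : i.1 < L.length, L.get ⟨i.1, h⟩ = (a, false)

def Pa (a : α) (i : Fin (L.length + 1)) : Prop := down L a i ∨ up L a i

def Qa (a : α) (j : Fin (L.length + 1)) : Prop :=
  (∃ h : j.1 < L.length, L.get ⟨j.1, h⟩ = (a, true)) ∨
    (∃ h : j.1 - 1 < L.length, 0 < j.1 ∧ L.get ⟨j.1 - 1, h⟩ = (a, false))

open Classical in
noncomputable def fa (a : α) (i : Fin (L.length + 1)) (h : Pa L a i) : Fin (L.length + 1) :=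
  if hd : down L a i then ⟨i.1 - 1, by omega⟩
  else ⟨i.1 + 1, by obtain ⟨h', _⟩ := h.resolve_left hd; omega⟩

variable {L}

lemma get_congr {m1 m2 : ℕ} (h1 : m1 < L.length) (h2 : m2 < L.length) (h : m1 = m2) :
    L.get ⟨m1, h1⟩ = L.get ⟨m2, h2⟩ := by subst h; rfl

lemma fa_val_of_down {a : α} {i : Fin (L.length + 1)} (hd : down L a i) (h : Pa L a i) :
    (fa L a i h).1 = i.1 - 1 := by
  simp only [fa]; rw [dif_pos hd]

lemma fa_val_of_not_down {a : α} {i : Fin (L.length + 1)} (hd : ¬ down L a i) (h : Pa L a i) :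
    (fa L a i h).1 = i.1 + 1 := by
  simp only [fa]; rw [dif_neg hd]

/-- Reducedness: no adjacent cancelling pair. -/
def Reduced : Prop := ∀ (L₂ L₃ : List (α × Bool)) (x : α) (b : Bool),
  L ≠ L₂ ++ (x, b) :: (x, !b) :: L₃

lemma Reduced.noadj (hred : Reduced (L := L)) {k : ℕ} (h1 : k < L.length)
    (h2 : k + 1 < L.length) {x : α} {b : Bool}
    (e1 : L.get ⟨k, h1⟩ = (x, b)) (e2 : L.get ⟨k + 1, h2⟩ = (x, !b)) : False := by
  apply hred (L.take k) (L.drop (k + 2)) x b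
  conv_lhs => rw [← List.take_append_drop k L]
  rw [List.drop_eq_getElem_cons h1, List.drop_eq_getElem_cons h2]
  simp only [List.get_eq_getElem] at e1 e2
  rw [e1, e2]

variable (hred : Reduced (L := L))
include hred

/-- `true` and `false` occurrences of the same letter are never adjacent in a reduced word. -/
lemma Reduced.not_down_of_up {a : α} {i : Fin (L.length + 1)} (hu : up L a i) :
    ¬ down L a i := by
  rintro ⟨g1, g0, g2⟩
  obtain ⟨u1, u2⟩ := hu
  exact hred.noadj g1 (by omega) g2 (by rw [get_congr _ u1 (by omega)]; exact u2)

lemma fa_spec (a : α) :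
    (∀ i h, Qa L a (fa L a i h)) ∧
    (∀ i hi j hj, fa L a i hi = fa L a j hj → i = j) ∧
    (∀ j, Qa L a j → ∃ i hi, fa L a i hi = j) := by
  classical
  refine ⟨?_, ?_, ?_⟩
  · intro i h
    by_cases hd : down L a i
    · obtain ⟨h1, h2, h3⟩ := hd
      have hval := fa_val_of_down ⟨h1, h2, h3⟩ h
      exact Or.inl ⟨by omega, by rw [get_congr _ h1 (by omega)]; exact h3⟩
    · obtain ⟨h1, h2⟩ := h.resolve_left hd
      have hval := fa_val_of_not_down hd h
      refine Or.inr ⟨by omega, by omega, by rw [get_congr _ h1 (by omega)]; exact h2⟩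
  · intro i hi j hj hij
    have hij' := congrArg Fin.val hij
    by_cases hdi : down L a i <;> by_cases hdj : down L a j
    · rw [fa_val_of_down hdi, fa_val_of_down hdj] at hij'
      obtain ⟨_, hi0, _⟩ := hdi; obtain ⟨_, hj0, _⟩ := hdj
      exact Fin.ext (by omega)
    · -- f i = i - 1 = j + 1 = f j : adjacent cancelling pair at positions j, j+1
      rw [fa_val_of_down hdi, fa_val_of_not_down hdj] at hij'
      obtain ⟨hi1, hi0, hietr⟩ := hdi
      obtain ⟨hj1, hjf⟩ := hj.resolve_left hdj
      exact absurd (hred.noadj hj1 (by omega) hjf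
        (by rw [get_congr _ hi1 (by omega)]; exact hietr)) (by simp)
    · rw [fa_val_of_not_down hdi, fa_val_of_down hdj] at hij'
      obtain ⟨hj1, hj0, hjtr⟩ := hdj
      obtain ⟨hi1, hif⟩ := hi.resolve_left hdi
      exact absurd (hred.noadj hi1 (by omega) hif
        (by rw [get_congr _ hj1 (by omega)]; exact hjtr)) (by simp)
    · rw [fa_val_of_not_down hdi, fa_val_of_not_down hdj] at hij'
      exact Fin.ext (by omega)
  · intro j hj
    rcases hj with ⟨h1, h2⟩ | ⟨h1, h0, h2⟩
    · have hd : down L a ⟨j.1 + 1, by omega⟩ :=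
        ⟨by simpa using h1, by simp, by rw [get_congr _ h1 (by simp)]; exact h2⟩
      refine ⟨⟨j.1 + 1, by omega⟩, Or.inl hd, Fin.ext ?_⟩
      rw [fa_val_of_down hd (Or.inl hd)]
      simp
    · have hu : up L a ⟨j.1 - 1, by omega⟩ :=
        ⟨by simp; omega, by rw [get_congr _ h1 rfl]; exact h2⟩
      have hnd := hred.not_down_of_up hu
      refine ⟨⟨j.1 - 1, by omega⟩, Or.inr hu, Fin.ext ?_⟩
      rw [fa_val_of_not_down hnd (Or.inr hu)]
      simp; omega

open Classical in
noncomputable def sa (a : α) : Equiv.Perm (Fin (L.length + 1)) :=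
  (exists_perm_extend (Pa L a) (Qa L a) (fa L a) (fa_spec hred a).1 (fa_spec hred a).2.1
    (fa_spec hred a).2.2).choose

lemma sa_apply (a : α) (i : Fin (L.length + 1)) (hi : Pa L a i) :
    sa hred a i = fa L a i hi := by
  classical
  exact (exists_perm_extend (Pa L a) (Qa L a) (fa L a) (fa_spec hred a).1 (fa_spec hred a).2.1
    (fa_spec hred a).2.2).choose_spec i hi

/-- If `L.get k = (a, true)` then `sa a` maps `k+1` to `k`. -/
lemma sa_true {k : ℕ} (hk : k < L.length) {a : α} (h : L.get ⟨k, hk⟩ = (a, true)) :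
    sa hred a ⟨k + 1, by omega⟩ = ⟨k, by omega⟩ := by
  have hd : down L a ⟨k + 1, by omega⟩ :=
    ⟨by simpa using hk, by simp, by rw [get_congr _ hk (by simp)]; exact h⟩
  rw [sa_apply hred a _ (Or.inl hd)]
  exact Fin.ext (by rw [fa_val_of_down hd (Or.inl hd)]; simp)

/-- If `L.get k = (a, false)` then `sa a` maps `k` to `k+1`. -/
lemma sa_false {k : ℕ} (hk : k < L.length) {a : α} (h : L.get ⟨k, hk⟩ = (a, false)) :
    sa hred a ⟨k, by omega⟩ = ⟨k + 1, by omega⟩ := by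
  have hu : up L a ⟨k, by omega⟩ := ⟨by simpa using hk, by rw [get_congr _ hk rfl]; exact h⟩
  have hnd := hred.not_down_of_up hu
  rw [sa_apply hred a _ (Or.inr hu)]
  exact Fin.ext (by rw [fa_val_of_not_down hnd (Or.inr hu)])

lemma key : ∀ m k, ∀ hmk : k + m = L.length,
    (List.map (fun x : α × Bool => cond x.2 (sa hred x.1) (sa hred x.1)⁻¹) (L.drop k)).prod
      ⟨L.length, by omega⟩ = ⟨k, by omega⟩ := by
  intro m
  induction m with
  | zero =>
    intro k hk
    obtain rfl : k = L.length := by omega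
    simp [List.drop_length]
  | succ n ih =>
    intro k hk
    have hkl : k < L.length := by omega
    rw [List.drop_eq_getElem_cons hkl, List.map_cons, List.prod_cons, Equiv.Perm.mul_apply,
      ih (k + 1) (by omega)]
    rcases e : L[k] with ⟨a, b⟩
    cases b
    · simp only [cond_false]
      have h2 := sa_false hred hkl (by simpa using e)
      rw [Equiv.Perm.inv_def, Equiv.symm_apply_eq]
      exact h2.symm
    · simp only [cond_true]
      exact sa_true hred hkl (by simpa using e)

end FGRF

/-- Every nontrivial element of a free group survives in some finite quotient. -/
lemma FreeGroup.exists_finite_perm_hom {α : Type*} (w : FreeGroup α) (hw : w ≠ 1) :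
    ∃ (n : ℕ) (φ : FreeGroup α →* Equiv.Perm (Fin (n + 1))), φ w ≠ 1 := by
  classical
  set L : List (α × Bool) := w.toWord with hL
  have hred : FGRF.Reduced (L := L) := by
    intro L₂ L₃ x b hLeq
    exact FreeGroup.reduce.not (L₁ := L) (by rw [FreeGroup.reduce_toWord]; exact hLeq)
  have hn : 0 < L.length := by
    rcases Nat.eq_zero_or_pos L.length with h | h
    · exact absurd (FreeGroup.toWord_eq_nil_iff.mp (List.length_eq_zero_iff.mp h)) hw
    · exact h
  refine ⟨L.length, FreeGroup.lift (fun a => FGRF.sa hred a), ?_⟩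
  intro hcon
  have hw' : FreeGroup.lift (fun a => FGRF.sa hred a) w
      = (List.map (fun x : α × Bool => cond x.2 (FGRF.sa hred x.1) (FGRF.sa hred x.1)⁻¹)
          L).prod := by
    conv_lhs => rw [← FreeGroup.mk_toWord (x := w)]
    exact FreeGroup.lift_mk
  have h0 := FGRF.key hred L.length 0 (by omega)
  rw [List.drop_zero, ← hw', hcon] at h0
  simp only [Equiv.Perm.one_apply] at h0
  rw [Fin.ext_iff] at h0
  simp only [Fin.val_mk] at h0
  omega

/-- Every free group is residually finite: every non-identity element avoids some
subgroup of finite index; equivalently, the intersection of all finite-index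
subgroups is trivial. -/
theorem free_group_residually_finite (G : Type*) [Group G] [IsFreeGroup G] :
    (∀ w : G, w ≠ 1 → ∃ H : Subgroup G, H.index ≠ 0 ∧ w ∉ H) ∧
      (⨅ H ∈ {H : Subgroup G | H.index ≠ 0}, H) = (⊥ : Subgroup G) := by
  have main : ∀ w : G, w ≠ 1 → ∃ H : Subgroup G, H.index ≠ 0 ∧ w ∉ H := by
    intro w hw
    set e := IsFreeGroup.toFreeGroup G with he
    have hw' : e w ≠ 1 := by
      simp [ne_eq, map_eq_one_iff e e.injective, hw]
    obtain ⟨n, φ, hφ⟩ := FreeGroup.exists_finite_perm_hom (e w) hw'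
    refine ⟨(φ.comp e.toMonoidHom).ker, ?_, ?_⟩
    · rw [Subgroup.index_ker]
      have : Nat.card (φ.comp e.toMonoidHom).range ≠ 0 :=
        Nat.card_ne_zero.mpr ⟨⟨1, Subgroup.one_mem _⟩, inferInstance⟩
      exact this
    · rw [MonoidHom.mem_ker]; exact hφ
  refine ⟨main, ?_⟩
  rw [eq_bot_iff]
  intro x hx
  simp only [Subgroup.mem_iInf, Set.mem_setOf_eq] at hx
  by_contra hx1
  have hx1' : x ≠ 1 := by simpa [Subgroup.mem_bot] using hx1
  obtain ⟨H, hH, hxH⟩ := main x hx1'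
  exact hxH (hx H hH)
end
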